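/- arXiv:2108.07045 — 12 statements merged into one kernel-verified Lean document; each statement's English description precedes it below -/
import Mathlib

section
/- The feasible region P(PC2) is exactly the projection of P(PC1) onto the (y, z)-variables: P(PC2) = {(y, z) : there exists x : I × J → ℝ such that (x, y, z) ∈ P(PC1)}. -/
open Finset

private lemma min_one_lip {a b : ℝ} (hab : a ≤ b) : min 1 b - min 1 a ≤ b - a := by
  rcases le_total b 1 with h | h
  · rw [min_eq_right h, min_eq_right (le_trans hab h)]
  · rw [min_eq_left h]
    rcases le_total a 1 with h' | h'
    · rw [min_eq_right h']; linarith
    · rw [min_eq_left h']; linarith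

private lemma exists_x_aux {J : Type*} [Fintype J] [Nonempty J] (dist : J → ℝ) (y : J → ℝ)
    (z : ℝ) (hy0 : ∀ j, 0 ≤ y j) (hsum : 1 ≤ ∑ j, y j)
    (hz : ∀ j, dist j - ∑ j' ∈ univ.filter (fun j' => dist j' < dist j),
      (dist j - dist j') * y j' ≤ z) :
    ∃ x : J → ℝ, (∑ j, x j = 1) ∧ (∀ j, x j ≤ y j) ∧ (∑ j, dist j * x j ≤ z) ∧
      (∀ j, 0 ≤ x j) := by
  classical
  set n := Fintype.card J with hn
  have hnpos : 0 < n := Fintype.card_pos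
  set e : J ≃ Fin n := Fintype.equivFin J with he
  set σ : Equiv.Perm (Fin n) := Tuple.sort (dist ∘ e.symm) with hσ
  set E : Fin n ≃ J := σ.trans e.symm with hE
  set f : Fin n → ℝ := fun k => dist (E k) with hf
  have hmono : Monotone f := Tuple.monotone_sort (dist ∘ e.symm)
  set T : ℕ → ℝ := fun m => ∑ k ∈ univ.filter (fun k : Fin n => (k : ℕ) < m), y (E k) with hT
  have hT0 : T 0 = 0 := by simp [hT]
  have hTsucc : ∀ k : Fin n, T ((k : ℕ) + 1) = T (k : ℕ) + y (E k) := by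
    intro k
    have hins : univ.filter (fun l : Fin n => (l : ℕ) < (k : ℕ) + 1)
        = insert k (univ.filter (fun l : Fin n => (l : ℕ) < (k : ℕ))) := by
      ext l
      simp only [mem_filter, mem_univ, true_and, mem_insert]
      constructor
      · intro h
        rcases Nat.lt_succ_iff_lt_or_eq.mp h with h' | h'
        · exact Or.inr h'
        · exact Or.inl (Fin.ext h')
      · rintro (rfl | h)
        · exact Nat.lt_succ_self _
        · exact Nat.lt_succ_of_lt h
    have hknot : k ∉ univ.filter (fun l : Fin n => (l : ℕ) < (k : ℕ)) := by simp
    rw [hT]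
    simp only
    rw [hins, sum_insert hknot]
    ring
  have hTn : T n = ∑ j, y j := by
    have : univ.filter (fun k : Fin n => (k : ℕ) < n) = univ := by
      ext k; simp [k.isLt]
    rw [hT]; simp only
    rw [this]
    exact Equiv.sum_comp E y
  have hTmono : Monotone T := by
    intro a b hab
    apply sum_le_sum_of_subset_of_nonneg
    · intro k hk
      simp only [mem_filter, mem_univ, true_and] at hk ⊢
      omega
    · intro k _ _
      exact hy0 _
  set F : ℕ → ℝ := fun m => min 1 (T m) with hF
  have hFmono : Monotone F := fun a b hab => min_le_min le_rfl (hTmono hab)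
  set x : J → ℝ := fun j => F ((E.symm j : ℕ) + 1) - F (E.symm j : ℕ) with hx
  have hxE : ∀ k : Fin n, x (E k) = F ((k : ℕ) + 1) - F (k : ℕ) := by
    intro k; rw [hx]; simp
  have hx0 : ∀ j, 0 ≤ x j := by
    intro j
    have := hFmono (Nat.le_succ (E.symm j : ℕ))
    simp only [hx]
    linarith
  have hxy : ∀ j, x j ≤ y j := by
    intro j
    have h1 : T (E.symm j : ℕ) ≤ T ((E.symm j : ℕ) + 1) := hTmono (Nat.le_succ _)
    have h2 := min_one_lip h1
    have h3 : T ((E.symm j : ℕ) + 1) = T (E.symm j : ℕ) + y (E (E.symm j)) :=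
      hTsucc (E.symm j)
    rw [Equiv.apply_symm_apply] at h3
    simp only [hx, hF] at h2 ⊢
    linarith
  have hxsum : ∑ j, x j = 1 := by
    rw [← Equiv.sum_comp E x]
    have : ∀ k : Fin n, x (E k) = F ((k : ℕ) + 1) - F (k : ℕ) := hxE
    rw [Finset.sum_congr rfl (fun k _ => this k)]
    rw [Fin.sum_univ_eq_sum_range (fun m => F (m + 1) - F m) n]
    rw [Finset.sum_range_sub F n]
    have h1 : F n = 1 := by
      rw [hF]; simp only
      rw [hTn, min_eq_left hsum]
    have h0 : F 0 = 0 := by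
      rw [hF]; simp only
      rw [hT0]
      simp
    rw [h1, h0, sub_zero]
  -- the cost bound
  have hex : ∃ m, 1 ≤ T (m + 1) := by
    refine ⟨n - 1, ?_⟩
    rw [show n - 1 + 1 = n by omega, hTn]
    exact hsum
  set K : ℕ := Nat.find hex with hK
  have hKspec : 1 ≤ T (K + 1) := Nat.find_spec hex
  have hKmin : ∀ m < K, ¬ 1 ≤ T (m + 1) := fun m hm => Nat.find_min hex hm
  have hKn : K < n := by
    have : K ≤ n - 1 := Nat.find_min' hex (by rw [show n - 1 + 1 = n by omega, hTn]; exact hsum)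
    omega
  have hTK : T K < 1 := by
    rcases Nat.eq_zero_or_pos K with h | h
    · rw [h, hT0]; norm_num
    · have := hKmin (K - 1) (by omega)
      rw [show K - 1 + 1 = K by omega] at this
      linarith [lt_of_not_ge this]
  set ks : Fin n := ⟨K, hKn⟩ with hks
  have hksval : (ks : ℕ) = K := rfl
  -- values of x on the sorted enumeration
  have hxlt : ∀ k : Fin n, (k : ℕ) < K → x (E k) = y (E k) := by
    intro k hk
    have h1 : T ((k : ℕ) + 1) ≤ T K := hTmono (by omega)
    have h2 : T (k : ℕ) ≤ T ((k : ℕ) + 1) := hTmono (Nat.le_succ _)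
    rw [hxE k, hF]
    simp only
    rw [min_eq_right (by linarith), min_eq_right (by linarith), hTsucc k]
    ring
  have hxks : x (E ks) = 1 - T K := by
    rw [hxE ks, hF]
    simp only [hks]
    rw [min_eq_right (le_of_lt hTK), min_eq_left hKspec]
  have hxgt : ∀ k : Fin n, K < (k : ℕ) → x (E k) = 0 := by
    intro k hk
    have h1 : 1 ≤ T (k : ℕ) := le_trans hKspec (hTmono (by omega))
    have h2 : 1 ≤ T ((k : ℕ) + 1) := le_trans h1 (hTmono (Nat.le_succ _))
    rw [hxE k, hF]
    simp only
    rw [min_eq_left h1, min_eq_left h2, sub_self]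
  have hcost : ∑ j, dist j * x j ≤ z := by
    rw [← Equiv.sum_comp E (fun j => dist j * x j)]
    have hsplit : ∑ k : Fin n, dist (E k) * x (E k)
        = ∑ k ∈ univ.filter (fun k : Fin n => (k : ℕ) ≤ K), dist (E k) * x (E k) := by
      symm
      apply Finset.sum_subset (filter_subset _ _)
      intro k _ hk
      simp only [mem_filter, mem_univ, true_and, not_le] at hk
      rw [hxgt k hk, mul_zero]
    have hins : univ.filter (fun k : Fin n => (k : ℕ) ≤ K)
        = insert ks (univ.filter (fun k : Fin n => (k : ℕ) < K)) := by
      ext l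
      simp only [mem_filter, mem_univ, true_and, mem_insert]
      constructor
      · intro h
        rcases Nat.lt_or_ge (l : ℕ) K with h' | h'
        · exact Or.inr h'
        · exact Or.inl (Fin.ext (by rw [hksval]; omega))
      · rintro (rfl | h)
        · rw [hksval]
        · omega
    have hknot : ks ∉ univ.filter (fun k : Fin n => (k : ℕ) < K) := by
      simp only [mem_filter, mem_univ, true_and, hksval]
      omega
    rw [hsplit, hins, sum_insert hknot, hxks]
    have heq : ∑ k ∈ univ.filter (fun k : Fin n => (k : ℕ) < K), dist (E k) * x (E k)
        = ∑ k ∈ univ.filter (fun k : Fin n => (k : ℕ) < K), dist (E k) * y (E k) :=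
      Finset.sum_congr rfl (fun k hk => by
        rw [hxlt k (by simpa using hk)])
    rw [heq]
    -- rewrite as f ks - sum of (f ks - f k) * y
    have hTKval : T K = ∑ k ∈ univ.filter (fun k : Fin n => (k : ℕ) < K), y (E k) := rfl
    have halg : dist (E ks) * (1 - T K)
          + ∑ k ∈ univ.filter (fun k : Fin n => (k : ℕ) < K), dist (E k) * y (E k)
        = dist (E ks)
          - ∑ k ∈ univ.filter (fun k : Fin n => (k : ℕ) < K),
              (dist (E ks) - dist (E k)) * y (E k) := by
      have hs : ∑ k ∈ univ.filter (fun k : Fin n => (k : ℕ) < K),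
            (dist (E ks) - dist (E k)) * y (E k)
          = dist (E ks) * ∑ k ∈ univ.filter (fun k : Fin n => (k : ℕ) < K), y (E k)
            - ∑ k ∈ univ.filter (fun k : Fin n => (k : ℕ) < K), dist (E k) * y (E k) := by
        rw [mul_sum, ← sum_sub_distrib]
        exact sum_congr rfl (fun k _ => by ring)
      rw [hTKval, hs]
      ring
    rw [halg]
    -- relate the sum over k < K to the sum over {j : dist j < dist (E ks)}
    have hreindex : ∑ k ∈ univ.filter (fun k : Fin n => (k : ℕ) < K),
          (dist (E ks) - dist (E k)) * y (E k)
        = ∑ j ∈ univ.filter (fun j => dist j < dist (E ks)),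
          (dist (E ks) - dist j) * y j := by
      rw [sum_filter, sum_filter, ← Equiv.sum_comp E
        (fun j => if dist j < dist (E ks) then (dist (E ks) - dist j) * y j else 0)]
      apply Finset.sum_congr rfl
      intro k _
      by_cases hlt : dist (E k) < dist (E ks)
      · have hkK : (k : ℕ) < K := by
          by_contra h
          have : ks ≤ k := by
            rw [Fin.le_def, hksval]; omega
          have := hmono this
          simp only [hf] at this
          exact absurd hlt (not_lt.mpr this)
        rw [if_pos hlt, if_pos hkK]
      · by_cases hkK : (k : ℕ) < K
        · have hle : k ≤ ks := by rw [Fin.le_def, hksval]; omega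
          have h1 : dist (E k) ≤ dist (E ks) := hmono hle
          have h2 : dist (E k) = dist (E ks) := le_antisymm h1 (not_lt.mp hlt)
          rw [if_neg hlt, if_pos hkK, h2, sub_self, zero_mul]
        · rw [if_neg hlt, if_neg hkK]
    rw [hreindex]
    exact hz (E ks)
  exact ⟨x, hxsum, hxy, hcost, hx0⟩

/-- The feasible region `P(PC2)` is exactly the projection of `P(PC1)`
onto the `(y, z)`-variables. -/
theorem stmt_0 {I J : Type*} [Fintype I] [Fintype J] [Nonempty I] [Nonempty J]
    (d : I → J → ℝ) (hd : ∀ i j, 0 ≤ d i j)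
    (p : ℕ) (hp1 : 1 ≤ p) (hp2 : p ≤ Fintype.card J) :
    {yz : (J → ℝ) × ℝ |
        (∑ j, yz.1 j = (p : ℝ)) ∧
        (∀ i j, d i j - ∑ j' ∈ univ.filter (fun j' => d i j' < d i j),
            (d i j - d i j') * yz.1 j' ≤ yz.2) ∧
        (∀ j, 0 ≤ yz.1 j ∧ yz.1 j ≤ 1)} =
    {yz : (J → ℝ) × ℝ | ∃ x : I → J → ℝ,
        (∑ j, yz.1 j = (p : ℝ)) ∧
        (∀ i, ∑ j, x i j = 1) ∧
        (∀ i j, x i j ≤ yz.1 j) ∧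
        (∀ i, ∑ j, d i j * x i j ≤ yz.2) ∧
        (∀ i j, 0 ≤ x i j) ∧
        (∀ j, 0 ≤ yz.1 j ∧ yz.1 j ≤ 1)} := by
  ext ⟨y, z⟩
  simp only [Set.mem_setOf_eq]
  constructor
  · rintro ⟨hsum, hineq, hbox⟩
    have h1 : (1 : ℝ) ≤ ∑ j, y j := by
      rw [hsum]
      exact_mod_cast hp1
    choose x hx1 hxy hcost hx0 using fun i =>
      exists_x_aux (d i) y z (fun j => (hbox j).1) h1 (hineq i)
    exact ⟨x, hsum, hx1, fun i j => hxy i j, hcost, fun i j => hx0 i j, hbox⟩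
  · rintro ⟨x, hsum, hx1, hxy, hcost, hx0, hbox⟩
    refine ⟨hsum, fun i j => ?_, hbox⟩
    have hsplit : ∑ j' : J, (d i j - d i j') * x i j'
        = ∑ j' ∈ univ.filter (fun j' => d i j' < d i j), (d i j - d i j') * x i j'
          + ∑ j' ∈ univ.filter (fun j' => ¬ d i j' < d i j), (d i j - d i j') * x i j' :=
      (Finset.sum_filter_add_sum_filter_not univ _ _).symm
    have hneg : ∑ j' ∈ univ.filter (fun j' => ¬ d i j' < d i j),
        (d i j - d i j') * x i j' ≤ 0 := by
      apply Finset.sum_nonpos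
      intro j' hj'
      simp only [mem_filter, mem_univ, true_and, not_lt] at hj'
      exact mul_nonpos_of_nonpos_of_nonneg (by linarith) (hx0 i j')
    have hle : ∑ j' ∈ univ.filter (fun j' => d i j' < d i j), (d i j - d i j') * x i j'
        ≤ ∑ j' ∈ univ.filter (fun j' => d i j' < d i j), (d i j - d i j') * y j' := by
      apply Finset.sum_le_sum
      intro j' hj'
      simp only [mem_filter, mem_univ, true_and] at hj'
      exact mul_le_mul_of_nonneg_left (hxy i j') (by linarith)
    have huniv : ∑ j' : J, (d i j - d i j') * x i j' = d i j - ∑ j', d i j' * x i j' := by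
      have : ∑ j' : J, (d i j - d i j') * x i j'
          = d i j * ∑ j', x i j' - ∑ j', d i j' * x i j' := by
        rw [mul_sum, ← sum_sub_distrib]
        exact sum_congr rfl (fun j' _ => by ring)
      rw [this, hx1 i, mul_one]
    have := hcost i
    linarith
end

section
/- The optimal (minimal) values of z over P(PC1) and over P(PC2) coincide. Moreover, a pair (y*, z*) attains the minimum of z over P(PC2) if and only if there exists x* : I × J → ℝ such that (x*, y*, z*) attains the minimum of z over P(PC1). -/
open Finset

/-- The feasible region of the LP-relaxation of PC1. -/
def PC1Feas {I J : Type*} [Fintype I] [Fintype J] (d : I → J → ℝ) (p : ℕ)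
    (x : I → J → ℝ) (y : J → ℝ) (z : ℝ) : Prop :=
  (∑ j, y j = (p : ℝ)) ∧
  (∀ i, ∑ j, x i j = 1) ∧
  (∀ i j, x i j ≤ y j) ∧
  (∀ i, ∑ j, d i j * x i j ≤ z) ∧
  (∀ i j, 0 ≤ x i j) ∧
  (∀ j, 0 ≤ y j ∧ y j ≤ 1)

/-- The feasible region of the LP-relaxation of PC2. -/
def PC2Feas {I J : Type*} [Fintype I] [Fintype J] (d : I → J → ℝ) (p : ℕ)
    (y : J → ℝ) (z : ℝ) : Prop :=
  (∑ j, y j = (p : ℝ)) ∧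
  (∀ i j, d i j - ∑ j' ∈ univ.filter (fun j' => d i j' < d i j),
      (d i j - d i j') * y j' ≤ z) ∧
  (∀ j, 0 ≤ y j ∧ y j ≤ 1)

/-- Greedy assignment lemma: given budgets `y` summing to at least 1 and the PC2-style
bound `z`, there is an assignment `x` with total 1, `0 ≤ x ≤ y`, and cost `≤ z`. -/
lemma assign {J : Type*} [Fintype J] [Nonempty J] (f y : J → ℝ)
    (hy0 : ∀ j, 0 ≤ y j) (hy1 : (1:ℝ) ≤ ∑ j, y j) (z : ℝ)
    (hz : ∀ j, f j - ∑ j' ∈ univ.filter (fun j' => f j' < f j), (f j - f j') * y j' ≤ z) :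
    ∃ x : J → ℝ, (∑ j, x j = 1) ∧ (∀ j, x j ≤ y j) ∧ (∀ j, 0 ≤ x j) ∧
      ∑ j, f j * x j ≤ z := by
  classical
  set A : Finset ℝ := (univ.image f).filter
    (fun r => 1 ≤ ∑ j ∈ univ.filter (fun j => f j ≤ r), y j) with hA
  have himg : (univ.image f).Nonempty := (univ_nonempty).image f
  have hAne : A.Nonempty := by
    refine ⟨(univ.image f).max' himg, ?_⟩
    rw [hA, mem_filter]
    refine ⟨(univ.image f).max'_mem himg, ?_⟩
    have : univ.filter (fun j => f j ≤ (univ.image f).max' himg) = univ := by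
      apply filter_true_of_mem
      intro j _
      exact le_max' _ _ (mem_image_of_mem f (mem_univ j))
    rw [this]; exact hy1
  set r : ℝ := A.min' hAne with hrdef
  have hrA : r ∈ A := A.min'_mem hAne
  have hr_img : r ∈ univ.image f := (mem_filter.mp hrA).1
  have hr_ge : (1:ℝ) ≤ ∑ j ∈ univ.filter (fun j => f j ≤ r), y j := (mem_filter.mp hrA).2
  set T : ℝ := ∑ j ∈ univ.filter (fun j => f j < r), y j with hTdef
  set S : ℝ := ∑ j ∈ univ.filter (fun j => f j = r), y j with hSdef
  have hsplit : ∑ j ∈ univ.filter (fun j => f j ≤ r), y j = T + S := by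
    rw [hTdef, hSdef, ← sum_union]
    · congr 1
      ext j
      simp only [mem_union, mem_filter, mem_univ, true_and]
      constructor
      · intro h; exact h.lt_or_eq
      · rintro (h | h); exacts [h.le, h.le]
    · rw [disjoint_left]
      intro j hj hj'
      exact absurd (mem_filter.mp hj').2 (ne_of_lt (mem_filter.mp hj).2)
  have hT1 : T < 1 := by
    by_contra h
    push_neg at h
    have hFne : (univ.filter (fun j => f j < r)).Nonempty := by
      by_contra hF
      rw [not_nonempty_iff_eq_empty] at hF
      rw [hTdef, hF, sum_empty] at h
      linarith
    have hFimg : ((univ.filter (fun j => f j < r)).image f).Nonempty := hFne.image f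
    set r' : ℝ := ((univ.filter (fun j => f j < r)).image f).max' hFimg with hr'def
    obtain ⟨j0, hj0, hj0eq⟩ := mem_image.mp (max'_mem _ hFimg)
    rw [← hr'def] at hj0eq
    have hr'lt : r' < r := by
      have := (mem_filter.mp hj0).2
      rwa [hj0eq] at this
    have hr'A : r' ∈ A := by
      rw [hA, mem_filter]
      refine ⟨mem_image.mpr ⟨j0, mem_univ j0, hj0eq⟩, ?_⟩
      calc (1:ℝ) ≤ T := h
        _ ≤ ∑ j ∈ univ.filter (fun j => f j ≤ r'), y j := by
            apply sum_le_sum_of_subset_of_nonneg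
            · intro j hj
              simp only [mem_filter, mem_univ, true_and] at hj ⊢
              exact le_max' _ _ (mem_image_of_mem f (mem_filter.mpr ⟨mem_univ j, hj⟩))
            · intro j _ _; exact hy0 j
    exact absurd (A.min'_le r' hr'A) (not_le.mpr hr'lt)
  have hTS : 1 ≤ T + S := hsplit ▸ hr_ge
  have hSpos : 0 < S := by linarith
  set c : ℝ := (1 - T) / S with hcdef
  have hc0 : 0 ≤ c := div_nonneg (by linarith) hSpos.le
  have hc1 : c ≤ 1 := (div_le_one hSpos).mpr (by linarith)
  have hcS : c * S = 1 - T := by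
    rw [hcdef]; field_simp
  refine ⟨fun j => if f j < r then y j else if f j = r then c * y j else 0, ?_, ?_, ?_, ?_⟩
  · rw [← sum_filter_add_sum_filter_not univ (fun j => f j < r)]
    have h1 : ∑ j ∈ univ.filter (fun j => f j < r),
        (if f j < r then y j else if f j = r then c * y j else 0) = T := by
      apply sum_congr rfl
      intro j hj
      rw [if_pos (mem_filter.mp hj).2]
    have h2 : ∑ j ∈ univ.filter (fun j => ¬ f j < r),
        (if f j < r then y j else if f j = r then c * y j else 0) = c * S := by
      rw [← sum_filter_add_sum_filter_not (univ.filter (fun j => ¬ f j < r)) (fun j => f j = r)]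
      have h21 : ∑ j ∈ (univ.filter (fun j => ¬ f j < r)).filter (fun j => f j = r),
          (if f j < r then y j else if f j = r then c * y j else 0)
          = ∑ j ∈ univ.filter (fun j => f j = r), c * y j := by
        rw [filter_filter]
        apply sum_congr
        · ext j
          simp only [mem_filter, mem_univ, true_and]
          constructor
          · exact fun h => h.2
          · exact fun h => ⟨not_lt.mpr h.ge, h⟩
        · intro j hj
          have hj' := (mem_filter.mp hj).2
          rw [if_neg (not_lt.mpr hj'.ge), if_pos hj']
      have h22 : ∑ j ∈ (univ.filter (fun j => ¬ f j < r)).filter (fun j => ¬ f j = r),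
          (if f j < r then y j else if f j = r then c * y j else 0) = 0 := by
        apply sum_eq_zero
        intro j hj
        simp only [mem_filter, mem_univ, true_and] at hj
        rw [if_neg hj.1, if_neg hj.2]
      have h23 : ∑ j ∈ univ.filter (fun j => f j = r), c * y j = c * S := by
        rw [hSdef, mul_sum]
      rw [h21, h22, add_zero, h23]
    rw [h1, h2, hcS]; ring
  · intro j
    dsimp only
    by_cases h1 : f j < r
    · rw [if_pos h1]
    by_cases h2 : f j = r
    · rw [if_neg h1, if_pos h2]
      nlinarith [hy0 j]
    · rw [if_neg h1, if_neg h2]; exact hy0 j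
  · intro j
    dsimp only
    by_cases h1 : f j < r
    · rw [if_pos h1]; exact hy0 j
    by_cases h2 : f j = r
    · rw [if_neg h1, if_pos h2]; exact mul_nonneg hc0 (hy0 j)
    · rw [if_neg h1, if_neg h2]
  · obtain ⟨jstar, _, hjstar⟩ := mem_image.mp hr_img
    have hzr : r - ∑ j' ∈ univ.filter (fun j' => f j' < r), (r - f j') * y j' ≤ z := by
      have := hz jstar
      rwa [hjstar] at this
    have hcost : ∑ j, f j * (if f j < r then y j else if f j = r then c * y j else 0)
        = ∑ j ∈ univ.filter (fun j => f j < r), f j * y j + r * (1 - T) := by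
      rw [← sum_filter_add_sum_filter_not univ (fun j => f j < r)]
      congr 1
      · apply sum_congr rfl
        intro j hj
        rw [if_pos (mem_filter.mp hj).2]
      · rw [← sum_filter_add_sum_filter_not (univ.filter (fun j => ¬ f j < r)) (fun j => f j = r)]
        have h21 : ∑ j ∈ (univ.filter (fun j => ¬ f j < r)).filter (fun j => f j = r),
            f j * (if f j < r then y j else if f j = r then c * y j else 0)
            = ∑ j ∈ univ.filter (fun j => f j = r), r * (c * y j) := by
          rw [filter_filter]
          apply sum_congr
          · ext j
            simp only [mem_filter, mem_univ, true_and]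
            constructor
            · exact fun h => h.2
            · exact fun h => ⟨not_lt.mpr h.ge, h⟩
          · intro j hj
            have hj' := (mem_filter.mp hj).2
            rw [if_neg (not_lt.mpr hj'.ge), if_pos hj', hj']
        have h22 : ∑ j ∈ (univ.filter (fun j => ¬ f j < r)).filter (fun j => ¬ f j = r),
            f j * (if f j < r then y j else if f j = r then c * y j else 0) = 0 := by
          apply sum_eq_zero
          intro j hj
          simp only [mem_filter, mem_univ, true_and] at hj
          rw [if_neg hj.1, if_neg hj.2, mul_zero]
        have h23 : ∑ j ∈ univ.filter (fun j => f j = r), r * (c * y j) = r * (c * S) := by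
          rw [hSdef, mul_sum, mul_sum]
        rw [h21, h22, add_zero, h23, hcS]
    rw [hcost]
    have hexp : r - ∑ j' ∈ univ.filter (fun j' => f j' < r), (r - f j') * y j'
        = ∑ j ∈ univ.filter (fun j => f j < r), f j * y j + r * (1 - T) := by
      rw [hTdef, mul_sub, mul_one, mul_sum]
      rw [show (∑ j' ∈ univ.filter (fun j' => f j' < r), (r - f j') * y j')
          = ∑ j' ∈ univ.filter (fun j' => f j' < r), (r * y j' - f j' * y j') by
        apply sum_congr rfl; intro j _; ring]
      rw [sum_sub_distrib]
      ring
    rw [← hexp]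
    exact hzr


/-- Any PC1-feasible point projects to a PC2-feasible point. -/
lemma pc1_to_pc2 {I J : Type*} [Fintype I] [Fintype J] {d : I → J → ℝ} {p : ℕ}
    {x : I → J → ℝ} {y : J → ℝ} {z : ℝ} (h : PC1Feas d p x y z) : PC2Feas d p y z := by
  obtain ⟨hy, hx1, hxy, hxz, hx0, hy01⟩ := h
  refine ⟨hy, ?_, hy01⟩
  intro i j
  set F : Finset J := univ.filter (fun j' => d i j' < d i j) with hF
  have step1 : ∑ j' ∈ F, (d i j - d i j') * x i j' ≤ ∑ j' ∈ F, (d i j - d i j') * y j' := by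
    apply sum_le_sum
    intro j' hj'
    have hlt : d i j' < d i j := (mem_filter.mp hj').2
    exact mul_le_mul_of_nonneg_left (hxy i j') (by linarith)
  have e1 : d i j = ∑ j', d i j * x i j' := by rw [← mul_sum, hx1 i, mul_one]
  have e0 : ∑ j' ∈ F, d i j * x i j'
      + ∑ j' ∈ univ.filter (fun j' => ¬ d i j' < d i j), d i j * x i j' = d i j := by
    rw [hF, sum_filter_add_sum_filter_not]
    exact e1.symm
  have e2' : ∑ j' ∈ F, d i j * x i j' - ∑ j' ∈ F, (d i j - d i j') * x i j'
      = ∑ j' ∈ F, d i j' * x i j' := by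
    rw [← sum_sub_distrib]
    apply sum_congr rfl
    intro j' _
    ring
  have e2 : d i j - ∑ j' ∈ F, (d i j - d i j') * x i j'
      = ∑ j' ∈ F, d i j' * x i j' + ∑ j' ∈ univ.filter (fun j' => ¬ d i j' < d i j), d i j * x i j' := by
    linarith
  have step2 : ∑ j' ∈ univ.filter (fun j' => ¬ d i j' < d i j), d i j * x i j'
      ≤ ∑ j' ∈ univ.filter (fun j' => ¬ d i j' < d i j), d i j' * x i j' := by
    apply sum_le_sum
    intro j' hj'
    have hle : d i j ≤ d i j' := not_lt.mp (mem_filter.mp hj').2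
    exact mul_le_mul_of_nonneg_right hle (hx0 i j')
  have e3 : ∑ j' ∈ F, d i j' * x i j'
      + ∑ j' ∈ univ.filter (fun j' => ¬ d i j' < d i j), d i j' * x i j'
      = ∑ j', d i j' * x i j' := by
    rw [hF, sum_filter_add_sum_filter_not]
  linarith [hxz i, step1, step2, e2, e3]


lemma pc2_to_pc1 {I J : Type*} [Fintype I] [Fintype J] [Nonempty J] {d : I → J → ℝ} {p : ℕ}
    (hp1 : 1 ≤ p) {y : J → ℝ} {z : ℝ} (h : PC2Feas d p y z) :
    ∃ x : I → J → ℝ, PC1Feas d p x y z := by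
  obtain ⟨hy, hzc, hy01⟩ := h
  have hy1 : (1:ℝ) ≤ ∑ j, y j := by
    rw [hy]; exact_mod_cast hp1
  have hx : ∀ i : I, ∃ xi : J → ℝ, (∑ j, xi j = 1) ∧ (∀ j, xi j ≤ y j) ∧ (∀ j, 0 ≤ xi j) ∧
      ∑ j, d i j * xi j ≤ z :=
    fun i => assign (d i) y (fun j => (hy01 j).1) hy1 z (hzc i)
  choose x hx1 hx2 hx3 hx4 using hx
  exact ⟨x, hy, hx1, fun i j => hx2 i j, hx4, fun i j => hx3 i j, hy01⟩

/-- The optimal (minimal) values of `z` over `P(PC1)` and `P(PC2)` coincide,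
and `(y*, z*)` attains the minimum of `z` over `P(PC2)` iff some `(x*, y*, z*)` attains the
minimum of `z` over `P(PC1)`. -/

theorem stmt_1 {I J : Type*} [Fintype I] [Fintype J] [Nonempty I] [Nonempty J]
    (d : I → J → ℝ) (hd : ∀ i j, 0 ≤ d i j)
    (p : ℕ) (hp1 : 1 ≤ p) (hp2 : p ≤ Fintype.card J) :
    sInf {z : ℝ | ∃ x y, PC1Feas d p x y z} = sInf {z : ℝ | ∃ y, PC2Feas d p y z} ∧
    ∀ (y : J → ℝ) (z : ℝ),
      ((PC2Feas d p y z ∧ ∀ (y' : J → ℝ) (z' : ℝ), PC2Feas d p y' z' → z ≤ z') ↔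
        ∃ x : I → J → ℝ, PC1Feas d p x y z ∧
          ∀ (x' : I → J → ℝ) (y' : J → ℝ) (z' : ℝ), PC1Feas d p x' y' z' → z ≤ z') := by
  have hset : {z : ℝ | ∃ x y, PC1Feas d p x y z} = {z : ℝ | ∃ y, PC2Feas d p y z} := by
    ext z
    constructor
    · rintro ⟨x, y, h⟩
      exact ⟨y, pc1_to_pc2 h⟩
    · rintro ⟨y, h⟩
      obtain ⟨x, hx⟩ := pc2_to_pc1 hp1 h
      exact ⟨x, y, hx⟩
  refine ⟨by rw [hset], ?_⟩
  intro y z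
  constructor
  · rintro ⟨h2, hmin⟩
    obtain ⟨x, hx⟩ := pc2_to_pc1 hp1 h2
    exact ⟨x, hx, fun x' y' z' h' => hmin y' z' (pc1_to_pc2 h')⟩
  · rintro ⟨x, hx, hmin⟩
    refine ⟨pc1_to_pc2 hx, ?_⟩
    intro y' z' h'
    obtain ⟨x', hx'⟩ := pc2_to_pc1 hp1 h'
    exact hmin x' y' z' hx'
end

section
/- For every feasible solution (x, y, z) of PC1-Rx there exists x̃ with x̃_{ij} ∈ {0, 1} for all i ∈ I, j ∈ J such that (x̃, y, z) is integer-feasible for PC1; in particular both solutions have the same objective value z. -/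
open Finset

/-- For every feasible solution `(x, y, z)` of PC1-Rx there exists a binary `x̃`
such that `(x̃, y, z)` is integer-feasible for PC1; in particular both solutions have the same
objective value `z`. -/
theorem stmt_2 {I J : Type*} [Fintype I] [Fintype J] [Nonempty I] [Nonempty J]
    (d : I → J → ℝ) (hd : ∀ i j, 0 ≤ d i j)
    (p : ℕ) (hp1 : 1 ≤ p) (hp2 : p ≤ Fintype.card J)
    (x : I → J → ℝ) (y : J → ℝ) (z : ℝ)
    (hybin : ∀ j, y j = 0 ∨ y j = 1)
    (hysum : ∑ j, y j = (p : ℝ))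
    (hxsum : ∀ i, ∑ j, x i j = 1)
    (hxy : ∀ i j, x i j ≤ y j)
    (hdz : ∀ i, ∑ j, d i j * x i j ≤ z)
    (hx0 : ∀ i j, 0 ≤ x i j) :
    ∃ xt : I → J → ℝ,
      (∀ i j, xt i j = 0 ∨ xt i j = 1) ∧
      (∀ j, y j = 0 ∨ y j = 1) ∧
      (∑ j, y j = (p : ℝ)) ∧
      (∀ i, ∑ j, xt i j = 1) ∧
      (∀ i j, xt i j ≤ y j) ∧
      (∀ i, ∑ j, d i j * xt i j ≤ z) := by
  classical
  have key : ∀ i, ∃ j0, x i j0 ≠ 0 ∧ ∀ j, x i j ≠ 0 → d i j0 ≤ d i j := by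
    intro i
    have hne : (Finset.univ.filter fun j => x i j ≠ 0).Nonempty := by
      by_contra h
      rw [Finset.not_nonempty_iff_eq_empty, Finset.filter_eq_empty_iff] at h
      have : ∑ j, x i j = 0 := Finset.sum_eq_zero fun j _ => by
        have := h (Finset.mem_univ j); simpa using this
      rw [hxsum i] at this; norm_num at this
    obtain ⟨j0, hj0, hmin⟩ := Finset.exists_min_image _ (fun j => d i j) hne
    refine ⟨j0, (Finset.mem_filter.mp hj0).2, fun j hj => hmin j ?_⟩
    exact Finset.mem_filter.mpr ⟨Finset.mem_univ j, hj⟩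
  choose f hf1 hf2 using key
  refine ⟨fun i j => if j = f i then 1 else 0, fun i j => ?_, hybin, hysum,
    fun i => ?_, fun i j => ?_, fun i => ?_⟩
  · by_cases h : j = f i <;> simp [h]
  · simp
  · have hyf : y (f i) = 1 := by
      rcases hybin (f i) with h | h
      · exact absurd (le_antisymm (h ▸ hxy i (f i)) (hx0 i (f i))) (hf1 i)
      · exact h
    by_cases h : j = f i
    · simp [h, hyf]
    · simp only [h, if_false]
      rcases hybin j with h' | h' <;> simp [h']
  · have h1 : ∑ j, d i j * (if j = f i then 1 else 0) = d i (f i) := by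
      simp [mul_ite]
    rw [h1]
    have h2 : d i (f i) = ∑ j, d i (f i) * x i j := by
      rw [← Finset.mul_sum, hxsum i, mul_one]
    rw [h2]
    refine le_trans (Finset.sum_le_sum fun j _ => ?_) (hdz i)
    by_cases h : x i j = 0
    · simp [h]
    · exact mul_le_mul_of_nonneg_right (hf2 i j h) (hx0 i j)
end

section
/- For every subset S ⊆ J with |S| = p, the pair (y^S, z^S), where y^S is the 0-1 indicator vector of S and z^S = max_{i∈I} min_{j∈S} d_{ij}, is integer-feasible for PC2; that is, the constraints of PC2 never overestimate the distance of a customer to its nearest open facility. -/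
open Finset

/-- Integer feasibility for the IP formulation PC2. -/
def PC2Int {I J : Type*} [Fintype I] [Fintype J] (d : I → J → ℝ) (p : ℕ)
    (y : J → ℝ) (z : ℝ) : Prop :=
  (∀ j, y j = 0 ∨ y j = 1) ∧
  (∑ j, y j = (p : ℝ)) ∧
  (∀ i j, d i j - ∑ j' ∈ univ.filter (fun j' => d i j' < d i j),
      (d i j - d i j') * y j' ≤ z)

/-- For every `S ⊆ J` with `|S| = p`, the pair `(y^S, z^S)`, where `y^S` is the
0-1 indicator of `S` and `z^S = max_{i∈I} min_{j∈S} d_{ij}`, is integer-feasible for PC2. -/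
theorem stmt_4 {I J : Type*} [Fintype I] [Fintype J] [Nonempty I] [Nonempty J] [DecidableEq J]
    (d : I → J → ℝ) (hd : ∀ i j, 0 ≤ d i j)
    (p : ℕ) (hp1 : 1 ≤ p) (hp2 : p ≤ Fintype.card J)
    (S : Finset J) (hcard : S.card = p) :
    PC2Int d p (fun j => if j ∈ S then (1 : ℝ) else 0)
      (Finset.univ.sup' Finset.univ_nonempty
        (fun i : I => S.inf' (Finset.card_pos.mp (by omega)) (d i))) := by
  have hS : S.Nonempty := Finset.card_pos.mp (by omega)
  refine ⟨fun j => by by_cases h : j ∈ S <;> simp [h], ?_, ?_⟩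
  · rw [Finset.sum_ite_mem, Finset.univ_inter, Finset.sum_const, hcard]
    simp
  · intro i j
    refine le_trans ?_ (Finset.le_sup' (fun i : I => S.inf' hS (d i)) (Finset.mem_univ i))
    obtain ⟨j₀, hj₀S, hj₀⟩ := Finset.exists_mem_eq_inf' hS (d i)
    have hsum_nonneg : ∀ j' ∈ univ.filter (fun j' => d i j' < d i j),
        (0:ℝ) ≤ (d i j - d i j') * (if j' ∈ S then (1:ℝ) else 0) := by
      intro j' hj'
      simp only [Finset.mem_filter] at hj'
      have : 0 ≤ d i j - d i j' := by linarith [hj'.2]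
      positivity
    by_cases hcase : d i j ≤ S.inf' hS (d i)
    · have : (0:ℝ) ≤ ∑ j' ∈ univ.filter (fun j' => d i j' < d i j),
          (d i j - d i j') * (if j' ∈ S then (1:ℝ) else 0) :=
        Finset.sum_nonneg hsum_nonneg
      linarith
    · push_neg at hcase
      have hj₀lt : d i j₀ < d i j := hj₀ ▸ hcase
      have hmem : j₀ ∈ univ.filter (fun j' => d i j' < d i j) := by
        simp [hj₀lt]
      have hsingle : (d i j - d i j₀) * (if j₀ ∈ S then (1:ℝ) else 0)
          ≤ ∑ j' ∈ univ.filter (fun j' => d i j' < d i j),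
            (d i j - d i j') * (if j' ∈ S then (1:ℝ) else 0) :=
        Finset.single_le_sum hsum_nonneg hmem
      simp only [hj₀S, if_pos, mul_one] at hsingle
      have : S.inf' hS (d i) = d i j₀ := hj₀
      linarith
end

section
/- For every integer-feasible pair (y, z) of PC2, letting S = {j ∈ J : y_j = 1}, one has z ≥ max_{i∈I} min_{j∈S} d_{ij}; that is, the constraints of PC2 force z to be at least the distance of every customer to its nearest open facility. -/
open Finset

/-- For every integer-feasible pair `(y, z)` of PC2, letting
`S = {j ∈ J : y_j = 1}`, one has `z ≥ max_{i∈I} min_{j∈S} d_{ij}`. -/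
theorem stmt_5 {I J : Type*} [Fintype I] [Fintype J] [Nonempty I] [Nonempty J]
    (d : I → J → ℝ) (hd : ∀ i j, 0 ≤ d i j)
    (p : ℕ) (hp1 : 1 ≤ p) (hp2 : p ≤ Fintype.card J)
    (y : J → ℝ) (z : ℝ)
    (hbin : ∀ j, y j = 0 ∨ y j = 1)
    (hsum : ∑ j, y j = (p : ℝ))
    (hcuts : ∀ i j, d i j - ∑ j' ∈ univ.filter (fun j' => d i j' < d i j),
        (d i j - d i j') * y j' ≤ z) :
    Finset.univ.sup' Finset.univ_nonempty
      (fun i : I => (univ.filter (fun j => y j = 1)).inf'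
        (by
          obtain ⟨j, hj⟩ : ∃ j, y j = 1 := by
            by_contra h
            push_neg at h
            have h0 : ∀ j, y j = 0 := fun j => (hbin j).resolve_right (h j)
            rw [Finset.sum_congr rfl (fun j _ => h0 j), Finset.sum_const_zero] at hsum
            have hineq : (1 : ℝ) ≤ (p : ℝ) := by exact_mod_cast hp1
            linarith
          exact ⟨j, Finset.mem_filter.mpr ⟨Finset.mem_univ j, hj⟩⟩)
        (d i)) ≤ z := by
  rw [Finset.sup'_le_iff]
  intro i _
  set S := univ.filter (fun j => y j = 1) with hS
  have hSne : S.Nonempty := Finset.nonempty_of_ne_empty (by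
    intro h
    have : ∃ j, y j = 1 := by
      by_contra hc
      push_neg at hc
      have h0 : ∀ j, y j = 0 := fun j => (hbin j).resolve_right (hc j)
      rw [Finset.sum_congr rfl (fun j _ => h0 j), Finset.sum_const_zero] at hsum
      have hineq : (1 : ℝ) ≤ (p : ℝ) := by exact_mod_cast hp1
      linarith
    obtain ⟨j, hj⟩ := this
    have : j ∈ S := Finset.mem_filter.mpr ⟨Finset.mem_univ j, hj⟩
    simp [h] at this)
  obtain ⟨j0, hj0mem, hj0⟩ := Finset.exists_mem_eq_inf' hSne (d i)
  have hmin : ∀ j' ∈ S, d i j0 ≤ d i j' := by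
    intro j' hj'
    rw [← hj0]
    exact Finset.inf'_le _ hj'
  have hzero : ∑ j' ∈ univ.filter (fun j' => d i j' < d i j0),
      (d i j0 - d i j') * y j' = 0 := by
    apply Finset.sum_eq_zero
    intro j' hj'
    rcases hbin j' with h0 | h1
    · rw [h0, mul_zero]
    · exfalso
      have hmem : j' ∈ S := Finset.mem_filter.mpr ⟨Finset.mem_univ j', h1⟩
      have := hmin j' hmem
      have hlt := (Finset.mem_filter.mp hj').2
      linarith
  have := hcuts i j0
  rw [hzero] at this
  calc S.inf' _ (d i) = d i j0 := hj0
    _ ≤ z := by linarith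
end

section
/- Let LB ≥ 0 be a lower bound on OPT(PC2), i.e. LB ≤ OPT(PC2). Then for every i ∈ I and j ∈ J, every integer-feasible pair (y, z) of PC2 satisfies the lifted optimality cut z ≥ max{LB, d_{ij}} − Σ_{j'∈J : d_{ij'} < d_{ij}} (max{LB, d_{ij}} − max{LB, d_{ij'}}) y_{j'}. -/
open Finset

/-- If `0 ≤ LB ≤ OPT(PC2)`, then every integer-feasible pair `(y, z)` of PC2
satisfies the lifted optimality cut for every `i ∈ I` and `j ∈ J`. -/
theorem stmt_6 {I J : Type*} [Fintype I] [Fintype J] [Nonempty I] [Nonempty J]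
    (d : I → J → ℝ) (hd : ∀ i j, 0 ≤ d i j)
    (p : ℕ) (hp1 : 1 ≤ p) (hp2 : p ≤ Fintype.card J)
    (LB : ℝ) (hLB0 : 0 ≤ LB)
    (hLB : LB ≤ sInf {z : ℝ | ∃ y, PC2Int d p y z}) :
    ∀ (i : I) (j : J) (y : J → ℝ) (z : ℝ), PC2Int d p y z →
      max LB (d i j) - ∑ j' ∈ univ.filter (fun j' => d i j' < d i j),
          (max LB (d i j) - max LB (d i j')) * y j' ≤ z := by
  intro i j y z hyz
  obtain ⟨hy01, hysum, hcons⟩ := hyz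
  have hz_mem : z ∈ {z : ℝ | ∃ y, PC2Int d p y z} := ⟨y, hy01, hysum, hcons⟩
  have hbdd : BddBelow {z : ℝ | ∃ y, PC2Int d p y z} := by
    refine ⟨0, ?_⟩
    rintro z' ⟨y', hy01', hysum', hcons'⟩
    obtain ⟨i0⟩ := ‹Nonempty I›
    obtain ⟨j0, -, hj0⟩ := Finset.exists_min_image univ (fun j => d i0 j) univ_nonempty
    have h := hcons' i0 j0
    have hempty : univ.filter (fun j' => d i0 j' < d i0 j0) = ∅ := by
      refine Finset.filter_eq_empty_iff.mpr ?_
      intro j' _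
      exact not_lt.mpr (hj0 j' (mem_univ j'))
    rw [hempty, Finset.sum_empty] at h
    linarith [hd i0 j0]
  have hLBz : LB ≤ z := le_trans hLB (csInf_le hbdd hz_mem)
  have hy0le : ∀ j', 0 ≤ y j' := fun j' => by rcases hy01 j' with h | h <;> simp [h]
  have hTne : (univ.filter (fun j' => y j' = 1)).Nonempty := by
    by_contra h
    rw [Finset.not_nonempty_iff_eq_empty, Finset.filter_eq_empty_iff] at h
    have hz0 : ∑ j', y j' = 0 := Finset.sum_eq_zero (fun j' _ => by
      rcases hy01 j' with h0 | h1
      · exact h0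
      · exact absurd h1 (h (mem_univ j')))
    rw [hysum] at hz0
    have : (1:ℝ) ≤ (p:ℝ) := by exact_mod_cast hp1
    linarith
  obtain ⟨js, hjs_mem, hjs_min⟩ := Finset.exists_min_image _ (fun j' => d i j') hTne
  have hjs1 : y js = 1 := (Finset.mem_filter.mp hjs_mem).2
  have hz_djs : d i js ≤ z := by
    have h := hcons i js
    have hzero : ∑ j' ∈ univ.filter (fun j' => d i j' < d i js),
        (d i js - d i j') * y j' = 0 := by
      refine Finset.sum_eq_zero fun j' hj' => ?_
      rcases hy01 j' with h0 | h1
      · simp [h0]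
      · exfalso
        have hlt := (Finset.mem_filter.mp hj').2
        have := hjs_min j' (Finset.mem_filter.mpr ⟨mem_univ j', h1⟩)
        linarith
    rw [hzero] at h
    linarith
  by_cases hcase : d i js < d i j
  · have hmemS : js ∈ univ.filter (fun j' => d i j' < d i j) :=
      Finset.mem_filter.mpr ⟨mem_univ js, hcase⟩
    have hsum_ge := Finset.single_le_sum
      (f := fun j' => (max LB (d i j) - max LB (d i j')) * y j')
      (fun j' hj' => by
        have hlt := (Finset.mem_filter.mp hj').2
        have h1 : max LB (d i j') ≤ max LB (d i j) := max_le_max le_rfl hlt.le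
        exact mul_nonneg (by linarith) (hy0le j'))
      hmemS
    simp only [hjs1, mul_one] at hsum_ge
    have hmaxjs : max LB (d i js) ≤ z := max_le hLBz hz_djs
    linarith
  · have hzero : ∑ j' ∈ univ.filter (fun j' => d i j' < d i j),
        (max LB (d i j) - max LB (d i j')) * y j' = 0 := by
      refine Finset.sum_eq_zero fun j' hj' => ?_
      rcases hy01 j' with h0 | h1
      · simp [h0]
      · exfalso
        have hlt := (Finset.mem_filter.mp hj').2
        have := hjs_min j' (Finset.mem_filter.mpr ⟨mem_univ j', h1⟩)
        push_neg at hcase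
        linarith
    rw [hzero]
    push_neg at hcase
    have h1 : max LB (d i j) ≤ max LB (d i js) := max_le_max le_rfl hcase
    have h2 : max LB (d i js) ≤ z := max_le hLBz hz_djs
    linarith
end

section
/- Let LB ≥ 0 be a lower bound on OPT(PC2), i.e. LB ≤ OPT(PC2). Then the linear program PCLB is a relaxation of PC2; in particular its optimal value L(LB) satisfies LB ≤ L(LB) ≤ OPT(PC2), so L(LB) is a lower bound on OPT(PC2) that is at least as large as LB. -/
open Finset

/-- Feasibility for the linear program PCLB. -/
def PCLBFeas {I J : Type*} [Fintype I] [Fintype J] (d : I → J → ℝ) (p : ℕ) (LB : ℝ)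
    (y : J → ℝ) (z : ℝ) : Prop :=
  (∑ j, y j = (p : ℝ)) ∧
  (∀ i j, LB < d i j →
    d i j - ∑ j' ∈ univ.filter (fun j' => d i j' < d i j),
        (d i j - max LB (d i j')) * y j' ≤ z) ∧
  LB ≤ z ∧
  (∀ j, 0 ≤ y j ∧ y j ≤ 1)

/-- If `0 ≤ LB ≤ OPT(PC2)`, then PCLB is a relaxation of PC2; in particular its
optimal value `L(LB)` satisfies `LB ≤ L(LB) ≤ OPT(PC2)`. -/
theorem stmt_7 {I J : Type*} [Fintype I] [Fintype J] [Nonempty I] [Nonempty J]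
    (d : I → J → ℝ) (hd : ∀ i j, 0 ≤ d i j)
    (p : ℕ) (hp1 : 1 ≤ p) (hp2 : p ≤ Fintype.card J)
    (LB : ℝ) (hLB0 : 0 ≤ LB)
    (hLB : LB ≤ sInf {z : ℝ | ∃ y, PC2Int d p y z}) :
    (∀ (y : J → ℝ) (z : ℝ), PC2Int d p y z → PCLBFeas d p LB y z) ∧
    LB ≤ sInf {z : ℝ | ∃ y, PCLBFeas d p LB y z} ∧
    sInf {z : ℝ | ∃ y, PCLBFeas d p LB y z} ≤ sInf {z : ℝ | ∃ y, PC2Int d p y z} := by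
  classical
  -- PC2 set is bounded below by 0
  have hbdd0 : ∀ z ∈ {z : ℝ | ∃ y, PC2Int d p y z}, (0:ℝ) ≤ z := by
    rintro z ⟨y, hy01, hsum, hcon⟩
    obtain ⟨i⟩ := (inferInstance : Nonempty I)
    obtain ⟨j, -, hj⟩ := Finset.exists_min_image Finset.univ (d i)
      ⟨Classical.arbitrary J, Finset.mem_univ _⟩
    have h := hcon i j
    have hfil : Finset.univ.filter (fun j' => d i j' < d i j) = ∅ := by
      refine Finset.filter_eq_empty_iff.mpr ?_
      intro j' _
      exact not_lt.mpr (hj j' (Finset.mem_univ _))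
    rw [hfil, Finset.sum_empty] at h
    linarith [hd i j]
  have hBdd : BddBelow {z : ℝ | ∃ y, PC2Int d p y z} := ⟨0, hbdd0⟩
  -- Part 1: every PC2 integer feasible pair is PCLB feasible
  have h1 : ∀ (y : J → ℝ) (z : ℝ), PC2Int d p y z → PCLBFeas d p LB y z := by
    rintro y z hfeas
    obtain ⟨hy01, hsum, hcon⟩ := hfeas
    have hy0 : ∀ j, 0 ≤ y j := fun j => by rcases hy01 j with h | h <;> simp [h]
    have hy1 : ∀ j, y j ≤ 1 := fun j => by rcases hy01 j with h | h <;> simp [h]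
    have hzLB : LB ≤ z := le_trans hLB (csInf_le hBdd ⟨y, hy01, hsum, hcon⟩)
    refine ⟨hsum, ?_, hzLB, fun j => ⟨hy0 j, hy1 j⟩⟩
    intro i j hij
    -- set of open facilities
    set S : Finset J := Finset.univ.filter (fun j' => y j' = 1) with hS
    have hSne : S.Nonempty := by
      by_contra h
      rw [Finset.not_nonempty_iff_eq_empty] at h
      have : ∀ j', y j' = 0 := by
        intro j'
        rcases hy01 j' with h0 | h0
        · exact h0
        · exfalso
          have : j' ∈ S := by simp [hS, h0]
          simp [h] at this
      have hs0 : (∑ j', y j') = 0 := Finset.sum_eq_zero fun j' _ => this j'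
      rw [hsum] at hs0
      have : (1:ℝ) ≤ (p:ℝ) := by exact_mod_cast hp1
      linarith
    obtain ⟨j0, hj0S, hj0min⟩ := Finset.exists_min_image S (d i) hSne
    have hyj0 : y j0 = 1 := by
      have := hj0S
      simp [hS] at this
      exact this
    -- d i j0 ≤ z
    have hdj0z : d i j0 ≤ z := by
      have h := hcon i j0
      have hzero : ∑ j' ∈ Finset.univ.filter (fun j' => d i j' < d i j0),
          (d i j0 - d i j') * y j' = 0 := by
        refine Finset.sum_eq_zero ?_
        intro j' hj'
        simp only [Finset.mem_filter] at hj'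
        rcases hy01 j' with h0 | h0
        · simp [h0]
        · exfalso
          have : j' ∈ S := by simp [hS, h0]
          exact absurd hj'.2 (not_lt.mpr (hj0min j' this))
      rw [hzero] at h
      linarith
    -- each term of the PCLB sum is nonneg
    have hterm : ∀ j' ∈ Finset.univ.filter (fun j' => d i j' < d i j),
        (0:ℝ) ≤ (d i j - max LB (d i j')) * y j' := by
      intro j' hj'
      simp only [Finset.mem_filter] at hj'
      have : max LB (d i j') ≤ d i j := max_le hij.le hj'.2.le
      exact mul_nonneg (by linarith) (hy0 j')
    by_cases hc : d i j0 < d i j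
    · -- the sum is at least (d i j - max LB (d i j0))
      have hj0mem : j0 ∈ Finset.univ.filter (fun j' => d i j' < d i j) := by
        simp [hc]
      have hsingle : (d i j - max LB (d i j0)) * y j0 ≤
          ∑ j' ∈ Finset.univ.filter (fun j' => d i j' < d i j),
            (d i j - max LB (d i j')) * y j' :=
        Finset.single_le_sum hterm hj0mem
      rw [hyj0, mul_one] at hsingle
      have hmax : max LB (d i j0) ≤ z := max_le hzLB hdj0z
      linarith
    · -- d i j ≤ d i j0 ≤ z and the sum is nonneg
      have hsumpos : (0:ℝ) ≤ ∑ j' ∈ Finset.univ.filter (fun j' => d i j' < d i j),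
          (d i j - max LB (d i j')) * y j' := Finset.sum_nonneg hterm
      push_neg at hc
      linarith
  -- PC2 set is nonempty: open any p facilities
  have hPC2ne : Set.Nonempty {z : ℝ | ∃ y, PC2Int d p y z} := by
    obtain ⟨S, -, hScard⟩ := Finset.exists_subset_card_eq (s := (Finset.univ : Finset J))
      (by simpa using hp2)
    refine ⟨∑ i, ∑ j, d i j, fun j => if j ∈ S then 1 else 0, ?_, ?_, ?_⟩
    · intro j; by_cases h : j ∈ S <;> simp [h]
    · rw [Finset.sum_ite_mem, Finset.univ_inter, Finset.sum_const, hScard]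
      simp
    · intro i j
      have hsumpos : (0:ℝ) ≤ ∑ j' ∈ Finset.univ.filter (fun j' => d i j' < d i j),
          (d i j - d i j') * (if j' ∈ S then 1 else 0) := by
        refine Finset.sum_nonneg ?_
        intro j' hj'
        simp only [Finset.mem_filter] at hj'
        have : (0:ℝ) ≤ d i j - d i j' := by linarith [hj'.2]
        positivity
      have h1' : d i j ≤ ∑ j', d i j' :=
        Finset.single_le_sum (fun j' _ => hd i j') (Finset.mem_univ j)
      have h2' : (∑ j', d i j') ≤ ∑ i', ∑ j', d i' j' :=
        Finset.single_le_sum (f := fun i' => ∑ j', d i' j')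
          (fun i' _ => Finset.sum_nonneg fun j' _ => hd i' j') (Finset.mem_univ i)
      linarith
  -- PCLB set is nonempty
  have hPCLBne : Set.Nonempty {z : ℝ | ∃ y, PCLBFeas d p LB y z} := by
    obtain ⟨z, y, hfeas⟩ := hPC2ne
    exact ⟨z, y, h1 y z hfeas⟩
  -- every PCLB feasible z is ≥ LB
  have hLBlower : ∀ z ∈ {z : ℝ | ∃ y, PCLBFeas d p LB y z}, LB ≤ z := by
    rintro z ⟨y, -, -, hz, -⟩
    exact hz
  have h2 : LB ≤ sInf {z : ℝ | ∃ y, PCLBFeas d p LB y z} :=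
    le_csInf hPCLBne hLBlower
  have h3 : sInf {z : ℝ | ∃ y, PCLBFeas d p LB y z} ≤
      sInf {z : ℝ | ∃ y, PC2Int d p y z} := by
    refine csInf_le_csInf ⟨LB, hLBlower⟩ hPC2ne ?_
    rintro z ⟨y, hfeas⟩
    exact ⟨y, h1 y z hfeas⟩
  exact ⟨h1, h2, h3⟩
end

section
/- Let LB ≥ 0 and let (y*, z*) be a feasible solution of the linear program PCLB with z* = LB (as is the case for any optimal solution of PCLB when L(LB) = LB). Then Σ_{j∈J : d_{ij} ≤ LB} y*_j ≥ 1 holds for all i ∈ I. -/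
open Finset

/-- Let `LB ≥ 0` and let `(y*, z*)` be a feasible solution of PCLB with `z* = LB`.
Then `Σ_{j : d_{ij} ≤ LB} y*_j ≥ 1` holds for all `i ∈ I`. -/
theorem stmt_8 {I J : Type*} [Fintype I] [Fintype J] [Nonempty I] [Nonempty J]
    (d : I → J → ℝ) (hd : ∀ i j, 0 ≤ d i j)
    (p : ℕ) (hp1 : 1 ≤ p) (hp2 : p ≤ Fintype.card J)
    (LB : ℝ) (hLB0 : 0 ≤ LB)
    (y : J → ℝ) (hfeas : PCLBFeas d p LB y LB) :
    ∀ i : I, 1 ≤ ∑ j ∈ univ.filter (fun j => d i j ≤ LB), y j := by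
  obtain ⟨hsum, hcon, hz, hbox⟩ := hfeas
  intro i
  by_cases hall : ∀ j, d i j ≤ LB
  · have : (univ.filter (fun j => d i j ≤ LB)) = (univ : Finset J) := by
      ext j; simp [hall j]
    rw [this, hsum]
    exact_mod_cast hp1
  · push_neg at hall
    obtain ⟨j1, hj1⟩ := hall
    have hT : (univ.filter (fun j => LB < d i j)).Nonempty :=
      ⟨j1, by simp [hj1]⟩
    obtain ⟨j0, hj0mem, hj0min⟩ := Finset.exists_min_image _ (fun j => d i j) hT
    have hj0 : LB < d i j0 := by simpa using hj0mem
    have hset : univ.filter (fun j' => d i j' < d i j0)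
        = univ.filter (fun j' => d i j' ≤ LB) := by
      ext j'
      simp only [mem_filter, mem_univ, true_and]
      constructor
      · intro h
        by_contra hc
        exact absurd (hj0min j' (by simp [lt_of_not_ge hc])) (not_le.mpr h)
      · intro h; exact lt_of_le_of_lt h hj0
    have hc := hcon i j0 hj0
    rw [hset] at hc
    have hmax : ∀ j' ∈ univ.filter (fun j' => d i j' ≤ LB),
        (d i j0 - max LB (d i j')) * y j' = (d i j0 - LB) * y j' := by
      intro j' hj'
      simp only [mem_filter, mem_univ, true_and] at hj'
      rw [max_eq_left hj']
    rw [Finset.sum_congr rfl hmax, ← Finset.mul_sum] at hc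
    nlinarith [hc, hj0]
end

section
/- Let LB ≥ 0, let y : J → ℝ satisfy 0 ≤ y_j ≤ 1 for all j ∈ J, and set z = LB. If Σ_{j'∈J : d_{ij'} ≤ LB} y_{j'} ≥ 1 holds for some i ∈ I, then for this i and every j ∈ J with d_{ij} > LB the inequality z ≥ d_{ij} − Σ_{j'∈J : d_{ij'} < d_{ij}} (d_{ij} − max{LB, d_{ij'}}) y_{j'} holds. -/
open Finset

/-- Let `LB ≥ 0`, `0 ≤ y ≤ 1`, and `z = LB`. If
`Σ_{j' : d_{ij'} ≤ LB} y_{j'} ≥ 1` holds for some `i ∈ I`, then for this `i` and every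
`j ∈ J` with `d_{ij} > LB` the corresponding inequality of PCLB holds. -/
theorem stmt_9 {I J : Type*} [Fintype I] [Fintype J] [Nonempty I] [Nonempty J]
    (d : I → J → ℝ) (hd : ∀ i j, 0 ≤ d i j)
    (p : ℕ) (hp1 : 1 ≤ p) (hp2 : p ≤ Fintype.card J)
    (LB : ℝ) (hLB0 : 0 ≤ LB)
    (y : J → ℝ) (hy : ∀ j, 0 ≤ y j ∧ y j ≤ 1)
    (z : ℝ) (hz : z = LB)
    (i : I) (hi : 1 ≤ ∑ j' ∈ univ.filter (fun j' => d i j' ≤ LB), y j') :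
    ∀ j : J, LB < d i j →
      d i j - ∑ j' ∈ univ.filter (fun j' => d i j' < d i j),
          (d i j - max LB (d i j')) * y j' ≤ z := by
  intro j hj
  subst hz
  have hST : (univ.filter fun j' => d i j' ≤ z) ⊆
      (univ.filter fun j' => d i j' < d i j) := by
    intro x hx
    simp only [mem_filter, mem_univ, true_and] at hx ⊢
    exact lt_of_le_of_lt hx hj
  have hS : ∑ j' ∈ univ.filter (fun j' => d i j' ≤ z),
      (d i j - max z (d i j')) * y j'
      = (d i j - z) * ∑ j' ∈ univ.filter (fun j' => d i j' ≤ z), y j' := by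
    rw [Finset.mul_sum]
    apply Finset.sum_congr rfl
    intro x hx
    simp only [mem_filter, mem_univ, true_and] at hx
    rw [max_eq_left hx]
  have h1 : (d i j - z) * 1 ≤ (d i j - z) *
      ∑ j' ∈ univ.filter (fun j' => d i j' ≤ z), y j' := by
    apply mul_le_mul_of_nonneg_left hi (by linarith)
  have h2 : ∑ j' ∈ univ.filter (fun j' => d i j' ≤ z),
      (d i j - max z (d i j')) * y j'
      ≤ ∑ j' ∈ univ.filter (fun j' => d i j' < d i j),
      (d i j - max z (d i j')) * y j' := by
    apply Finset.sum_le_sum_of_subset_of_nonneg hST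
    intro x hx _
    simp only [mem_filter, mem_univ, true_and] at hx
    have : max z (d i x) ≤ d i j := max_le hj.le hx.le
    exact mul_nonneg (by linarith) (hy x).1
  rw [hS] at h2
  linarith
end

section
/- Let LB ≥ 0 be a lower bound on OPT(PC2), i.e. LB ≤ OPT(PC2). Then L(LB) = LB holds if and only if there exists a fractional set cover solution with radius LB that uses at most p sets. -/
open Finset

/-- Padding lemma: a subprobability vector summing to at most `p ≤ |J|` can be increased
to sum exactly `p`, staying in `[0,1]`. -/
lemma pad_exists {J : Type*} [Fintype J] (p : ℕ) (hp2 : p ≤ Fintype.card J)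
    (y : J → ℝ) (hy01 : ∀ j, 0 ≤ y j ∧ y j ≤ 1) (hys : ∑ j, y j ≤ (p : ℝ)) :
    ∃ y' : J → ℝ, (∀ j, y j ≤ y' j) ∧ (∀ j, 0 ≤ y' j ∧ y' j ≤ 1) ∧ ∑ j, y' j = (p : ℝ) := by
  classical
  set s : ℝ := ∑ j, y j with hs
  set n : ℝ := (Fintype.card J : ℝ) with hn
  have hsn : s ≤ n := by
    have : ∑ j, y j ≤ ∑ _j : J, (1 : ℝ) := Finset.sum_le_sum fun j _ => (hy01 j).2
    simpa [hn] using this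
  have hpn : (p : ℝ) ≤ n := by rw [hn]; exact_mod_cast hp2
  by_cases hcase : s = n
  · refine ⟨y, fun j => le_rfl, hy01, ?_⟩
    have : (p : ℝ) = s := le_antisymm (hcase ▸ hpn) hys
    exact this.symm
  · have hlt : s < n := lt_of_le_of_ne hsn hcase
    have hden : (0:ℝ) < n - s := by linarith
    set t : ℝ := ((p : ℝ) - s) / (n - s) with ht
    have ht0 : 0 ≤ t := div_nonneg (by linarith) hden.le
    have ht1 : t ≤ 1 := by
      rw [ht, div_le_one hden]; linarith
    refine ⟨fun j => y j + t * (1 - y j), ?_, ?_, ?_⟩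
    · intro j
      show y j ≤ y j + t * (1 - y j)
      have : 0 ≤ t * (1 - y j) := mul_nonneg ht0 (by linarith [(hy01 j).2])
      linarith
    · intro j
      have h1 : 0 ≤ t * (1 - y j) := mul_nonneg ht0 (by linarith [(hy01 j).2])
      have h2 : 0 ≤ (1 - t) * (1 - y j) :=
        mul_nonneg (by linarith) (by linarith [(hy01 j).2])
      constructor
      · show 0 ≤ y j + t * (1 - y j)
        linarith [(hy01 j).1]
      · show y j + t * (1 - y j) ≤ 1
        nlinarith
    · show ∑ j, (y j + t * (1 - y j)) = (p : ℝ)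
      have hsum : ∑ j, (y j + t * (1 - y j)) =
          (∑ j, y j) + t * ((Fintype.card J : ℝ) - ∑ j, y j) := by
        rw [Finset.sum_add_distrib, ← Finset.mul_sum]
        congr 2
        rw [Finset.sum_sub_distrib, Finset.sum_const, Finset.card_univ, nsmul_eq_mul, mul_one]
      rw [hsum, ← hs, ← hn, ht, div_mul_cancel₀ _ (ne_of_gt hden)]
      ring

/-- For `0 ≤ LB ≤ OPT(PC2)`, one has `L(LB) = LB` iff there exists a fractional
set cover solution with radius `LB` that uses at most `p` sets. -/
theorem stmt_10 {I J : Type*} [Fintype I] [Fintype J] [Nonempty I] [Nonempty J]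
    (d : I → J → ℝ) (hd : ∀ i j, 0 ≤ d i j)
    (p : ℕ) (hp1 : 1 ≤ p) (hp2 : p ≤ Fintype.card J)
    (LB : ℝ) (hLB0 : 0 ≤ LB)
    (hLB : LB ≤ sInf {z : ℝ | ∃ y, PC2Int d p y z}) :
    sInf {z : ℝ | ∃ y, PCLBFeas d p LB y z} = LB ↔
      ∃ y : J → ℝ, (∀ j, 0 ≤ y j ∧ y j ≤ 1) ∧
        (∀ i : I, 1 ≤ ∑ j ∈ univ.filter (fun j => d i j ≤ LB), y j) ∧
        ∑ j, y j ≤ (p : ℝ) := by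
  classical
  set S : Set ℝ := {z : ℝ | ∃ y, PCLBFeas d p LB y z} with hSdef
  have hlbS : ∀ z ∈ S, LB ≤ z := by
    rintro z ⟨y, -, -, hz, -⟩; exact hz
  constructor
  · -- forward direction: compactness / attainment argument
    intro hinf
    -- the feasible polytope
    set P : Set (J → ℝ) := {y | (∀ j, 0 ≤ y j ∧ y j ≤ 1) ∧ ∑ j, y j = (p : ℝ)} with hPdef
    -- the objective function
    set g : I × J → (J → ℝ) → ℝ := fun ij y =>
      if LB < d ij.1 ij.2 then
        d ij.1 ij.2 - ∑ j' ∈ univ.filter (fun j' => d ij.1 j' < d ij.1 ij.2),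
          (d ij.1 ij.2 - max LB (d ij.1 j')) * y j'
      else LB with hgdef
    have hne : (univ : Finset (I × J)).Nonempty := univ_nonempty
    set f : (J → ℝ) → ℝ := fun y => max LB ((univ : Finset (I × J)).sup' hne (fun ij => g ij y))
      with hfdef
    have hfeas : ∀ y z, PCLBFeas d p LB y z ↔ (y ∈ P ∧ f y ≤ z) := by
      intro y z
      constructor
      · rintro ⟨hsum, hcons, hzLB, h01⟩
        refine ⟨⟨h01, hsum⟩, ?_⟩
        rw [hfdef]
        refine max_le hzLB ?_
        rw [Finset.sup'_le_iff]
        rintro ⟨i, j⟩ -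
        rw [hgdef]
        dsimp only
        split_ifs with hij
        · exact hcons i j hij
        · exact hzLB
      · rintro ⟨⟨h01, hsum⟩, hfz⟩
        rw [hfdef] at hfz
        have hzLB : LB ≤ z := le_trans (le_max_left _ _) hfz
        have hsup : ∀ ij : I × J, g ij y ≤ z := by
          intro ij
          have h1 := Finset.le_sup' (fun ij => g ij y) (mem_univ ij)
          exact le_trans h1 (le_trans (le_max_right _ _) hfz)
        refine ⟨hsum, ?_, hzLB, h01⟩
        intro i j hij
        have := hsup (i, j)
        rw [hgdef] at this
        simpa [hij] using this
    -- P is compact and nonempty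
    have hPclosed_eq : P = (Set.univ.pi fun _ : J => Set.Icc (0:ℝ) 1) ∩
        {y : J → ℝ | ∑ j, y j = (p : ℝ)} := by
      ext y
      constructor
      · rintro ⟨h01, hsum⟩
        exact ⟨fun j _ => ⟨(h01 j).1, (h01 j).2⟩, hsum⟩
      · rintro ⟨hpi, hsum⟩
        exact ⟨fun j => hpi j trivial, hsum⟩
    have hPc : IsCompact P := by
      rw [hPclosed_eq]
      exact (isCompact_univ_pi fun _ => isCompact_Icc).inter_right
        (isClosed_eq (continuous_finset_sum _ fun j _ => continuous_apply j) continuous_const)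
    have hPne : P.Nonempty := by
      have hcard : (0:ℝ) < (Fintype.card J : ℝ) := by
        have : 0 < Fintype.card J := lt_of_lt_of_le hp1 hp2
        exact_mod_cast this
      refine ⟨fun _ => (p : ℝ) / (Fintype.card J : ℝ), ⟨fun j => ⟨?_, ?_⟩, ?_⟩⟩
      · positivity
      · rw [div_le_one hcard]; exact_mod_cast hp2
      · rw [Finset.sum_const, Finset.card_univ, nsmul_eq_mul, mul_div_cancel₀]
        exact ne_of_gt hcard
    -- f is continuous
    have hfc : Continuous f := by
      refine continuous_const.max ?_
      refine Continuous.finset_sup'_apply hne ?_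
      rintro ⟨i, j⟩ -
      rw [hgdef]
      dsimp only
      split_ifs with hij
      · exact continuous_const.sub
          (continuous_finset_sum _ fun j' _ => (continuous_const.mul (continuous_apply j')))
      · exact continuous_const
    obtain ⟨y₀, hy₀P, hy₀min⟩ := hPc.exists_isMinOn hPne hfc.continuousOn
    -- the infimum of S equals f y₀
    have hSeq : sInf S = f y₀ := by
      have hmem : f y₀ ∈ S := ⟨y₀, (hfeas y₀ (f y₀)).mpr ⟨hy₀P, le_rfl⟩⟩
      have hlb : ∀ z ∈ S, f y₀ ≤ z := by
        intro z hz
        obtain ⟨y, hy⟩ := hz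
        obtain ⟨hyP, hfz⟩ := (hfeas y z).mp hy
        exact le_trans (hy₀min hyP) hfz
      exact le_antisymm (csInf_le ⟨f y₀, hlb⟩ hmem) (le_csInf ⟨_, hmem⟩ hlb)
    have hfy₀ : f y₀ = LB := by rw [← hSeq]; exact hinf
    have hg_le : ∀ ij : I × J, g ij y₀ ≤ LB := by
      intro ij
      have h1 := Finset.le_sup' (fun ij => g ij y₀) (mem_univ ij)
      exact le_trans h1 (le_trans (le_max_right _ _) hfy₀.le)
    obtain ⟨hy₀01, hy₀sum⟩ := hy₀P
    refine ⟨y₀, hy₀01, ?_, le_of_eq hy₀sum⟩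
    intro i
    by_cases hA : (univ.filter (fun j => LB < d i j) : Finset J).Nonempty
    · obtain ⟨j₀, hj₀mem, hj₀min⟩ := Finset.exists_min_image _ (fun j => d i j) hA
      have hj₀ : LB < d i j₀ := (Finset.mem_filter.mp hj₀mem).2
      have hfilter : univ.filter (fun j' => d i j' < d i j₀) =
          univ.filter (fun j' => d i j' ≤ LB) := by
        ext j'
        simp only [Finset.mem_filter, Finset.mem_univ, true_and]
        constructor
        · intro hlt
          by_contra hc
          push_neg at hc
          have : j' ∈ univ.filter (fun j => LB < d i j) := by
            simp [hc]
          exact absurd (hj₀min j' this) (not_le.mpr hlt)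
        · intro hle; exact lt_of_le_of_lt hle hj₀
      have hcons := hg_le (i, j₀)
      rw [hgdef] at hcons
      simp only [if_pos hj₀] at hcons
      rw [hfilter] at hcons
      have hsum_eq : ∑ j' ∈ univ.filter (fun j' => d i j' ≤ LB),
          (d i j₀ - max LB (d i j')) * y₀ j' =
          (d i j₀ - LB) * ∑ j' ∈ univ.filter (fun j' => d i j' ≤ LB), y₀ j' := by
        rw [Finset.mul_sum]
        refine Finset.sum_congr rfl ?_
        intro j' hj'
        have : d i j' ≤ LB := (Finset.mem_filter.mp hj').2
        rw [max_eq_left this]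
      rw [hsum_eq] at hcons
      have hpos : (0:ℝ) < d i j₀ - LB := by linarith
      have h2 : (d i j₀ - LB) * 1 ≤
          (d i j₀ - LB) * ∑ j' ∈ univ.filter (fun j' => d i j' ≤ LB), y₀ j' := by
        rw [mul_one]; linarith
      exact le_of_mul_le_mul_left h2 hpos
    · -- all facilities within LB
      have hall : univ.filter (fun j => d i j ≤ LB) = univ := by
        ext j
        simp only [Finset.mem_filter, Finset.mem_univ, true_and, iff_true]
        by_contra hc
        push_neg at hc
        exact hA ⟨j, by simp [hc]⟩
      rw [hall, hy₀sum]
      exact_mod_cast hp1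
  · -- backward direction
    rintro ⟨y, hy01, hcov, hysum⟩
    obtain ⟨y', hyy', hy'01, hy'sum⟩ := pad_exists p hp2 y hy01 hysum
    have hmem : LB ∈ S := by
      refine ⟨y', hy'sum, ?_, le_rfl, hy'01⟩
      intro i j hij
      have hsub : univ.filter (fun j' => d i j' ≤ LB) ⊆
          univ.filter (fun j' => d i j' < d i j) := by
        intro j' hj'
        simp only [Finset.mem_filter, Finset.mem_univ, true_and] at hj' ⊢
        exact lt_of_le_of_lt hj' hij
      have ha : (d i j - LB) * ∑ j' ∈ univ.filter (fun j' => d i j' ≤ LB), y' j' =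
          ∑ j' ∈ univ.filter (fun j' => d i j' ≤ LB),
            (d i j - max LB (d i j')) * y' j' := by
        rw [Finset.mul_sum]
        refine Finset.sum_congr rfl ?_
        intro j' hj'
        have : d i j' ≤ LB := (Finset.mem_filter.mp hj').2
        rw [max_eq_left this]
      have hb : ∑ j' ∈ univ.filter (fun j' => d i j' ≤ LB),
            (d i j - max LB (d i j')) * y' j' ≤
          ∑ j' ∈ univ.filter (fun j' => d i j' < d i j),
            (d i j - max LB (d i j')) * y' j' := by
        refine Finset.sum_le_sum_of_subset_of_nonneg hsub ?_
        intro j' hj' _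
        have hlt : d i j' < d i j := (Finset.mem_filter.mp hj').2
        have : max LB (d i j') < d i j := max_lt hij hlt
        exact mul_nonneg (by linarith) (hy'01 j').1
      have h1 : (d i j - LB) * ∑ j' ∈ univ.filter (fun j' => d i j' ≤ LB), y' j' ≤
          ∑ j' ∈ univ.filter (fun j' => d i j' < d i j),
            (d i j - max LB (d i j')) * y' j' := le_trans (le_of_eq ha) hb
      have h2 : (1:ℝ) ≤ ∑ j' ∈ univ.filter (fun j' => d i j' ≤ LB), y' j' := by
        refine le_trans (hcov i) (Finset.sum_le_sum ?_)
        intro j' _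
        exact hyy' j'
      have h3 : (d i j - LB) * 1 ≤ (d i j - LB) *
          ∑ j' ∈ univ.filter (fun j' => d i j' ≤ LB), y' j' :=
        mul_le_mul_of_nonneg_left h2 (by linarith)
      rw [mul_one] at h3
      linarith
    exact le_antisymm (csInf_le ⟨LB, hlbS⟩ hmem) (le_csInf ⟨LB, hmem⟩ hlbS)
end

section
/- Let LB ≥ 0 be a lower bound on OPT(PC2) with L(LB) = LB. Then L(LB') = LB' holds for all LB' ≥ LB. -/
open Finset

/-- The optimal value `L(LB)` of the linear program PCLB. -/
noncomputable def Lval {I J : Type*} [Fintype I] [Fintype J] (d : I → J → ℝ) (p : ℕ)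
    (LB : ℝ) : ℝ :=
  sInf {z : ℝ | ∃ y, PCLBFeas d p LB y z}

/-- The feasible set of PCLB is nonempty. -/
lemma pclb_feas_nonempty {I J : Type*} [Fintype I] [Fintype J] [Nonempty I] [Nonempty J]
    (d : I → J → ℝ) (p : ℕ) (hp1 : 1 ≤ p) (hp2 : p ≤ Fintype.card J) (L : ℝ) :
    Set.Nonempty {z : ℝ | ∃ y, PCLBFeas d p L y z} := by
  have hn : (0 : ℝ) < (Fintype.card J : ℝ) := by
    exact_mod_cast Fintype.card_pos
  set M : ℝ := (univ : Finset (I × J)).sup' (univ_nonempty) (fun ij => d ij.1 ij.2) with hM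
  refine ⟨max L M, fun _ => (p : ℝ) / (Fintype.card J : ℝ), ?_, ?_, le_max_left _ _, ?_⟩
  · rw [Finset.sum_const, card_univ, nsmul_eq_mul]
    field_simp
  · intro i j hij
    have hsum : 0 ≤ ∑ j' ∈ univ.filter (fun j' => d i j' < d i j),
        (d i j - max L (d i j')) * ((p : ℝ) / (Fintype.card J : ℝ)) := by
      apply Finset.sum_nonneg
      intro j' hj'
      have hj'lt : d i j' < d i j := by
        simpa using hj'
      have : max L (d i j') ≤ d i j := max_le hij.le hj'lt.le
      have hy : (0:ℝ) ≤ (p : ℝ) / (Fintype.card J : ℝ) := by positivity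
      exact mul_nonneg (by linarith) hy
    have hdM : d i j ≤ M := Finset.le_sup' (fun ij : I × J => d ij.1 ij.2) (mem_univ (i, j))
    have : d i j ≤ max L M := le_trans hdM (le_max_right _ _)
    linarith
  · intro j
    constructor
    · positivity
    · rw [div_le_one hn]
      exact_mod_cast hp2

/-- Pointwise coefficient inequality. -/
lemma ptwise (D e LB LB' y : ℝ) (h2 : LB ≤ LB') (h3 : LB' < D) (he : e < D) (hy : 0 ≤ y) :
    (D - LB') * ((D - max LB e) * y) ≤ (D - LB) * ((D - max LB' e) * y) := by
  rcases le_total LB e with h | h <;> rcases le_total LB' e with h' | h' <;>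
      simp [max_eq_left, max_eq_right, h, h']
  · nlinarith [mul_nonneg (sub_nonneg.2 h2) (mul_nonneg (sub_nonneg.2 he.le) hy)]
  · nlinarith [mul_nonneg (mul_nonneg (sub_nonneg.2 h3.le) hy) (sub_nonneg.2 h)]
  · have he1 : e = LB := le_antisymm h (h2.trans h')
    have he2 : LB' = LB := le_antisymm (h'.trans h) h2
    rw [he1, he2]
  · nlinarith [mul_nonneg (mul_nonneg (sub_nonneg.2 h3.le) hy) (sub_nonneg.2 h2)]

/-- Let `0 ≤ LB ≤ OPT(PC2)` with `L(LB) = LB`. Then `L(LB') = LB'` holds for all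
`LB' ≥ LB`. -/
theorem stmt_11 {I J : Type*} [Fintype I] [Fintype J] [Nonempty I] [Nonempty J]
    (d : I → J → ℝ) (hd : ∀ i j, 0 ≤ d i j)
    (p : ℕ) (hp1 : 1 ≤ p) (hp2 : p ≤ Fintype.card J)
    (LB : ℝ) (hLB0 : 0 ≤ LB)
    (hLB : LB ≤ sInf {z : ℝ | ∃ y, PC2Int d p y z})
    (hfix : Lval d p LB = LB) :
    ∀ LB' : ℝ, LB ≤ LB' → Lval d p LB' = LB' := by
  intro LB' hLB'
  have hne' : Set.Nonempty {z : ℝ | ∃ y, PCLBFeas d p LB' y z} :=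
    pclb_feas_nonempty d p hp1 hp2 LB'
  have hne : Set.Nonempty {z : ℝ | ∃ y, PCLBFeas d p LB y z} :=
    pclb_feas_nonempty d p hp1 hp2 LB
  have hbdd' : BddBelow {z : ℝ | ∃ y, PCLBFeas d p LB' y z} :=
    ⟨LB', fun z hz => by obtain ⟨y, _, _, hz3, _⟩ := hz; exact hz3⟩
  -- lower bound
  have hlow : LB' ≤ Lval d p LB' := by
    apply le_csInf hne'
    intro z hz
    obtain ⟨y, _, _, hz3, _⟩ := hz
    exact hz3
  -- upper bound
  have hupp : Lval d p LB' ≤ LB' := by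
    apply le_of_forall_pos_le_add
    intro ε hε
    obtain ⟨z, hzmem, hzlt⟩ :=
      Real.lt_sInf_add_pos hne hε
    rw [show sInf {z : ℝ | ∃ y, PCLBFeas d p LB y z} = Lval d p LB from rfl, hfix] at hzlt
    obtain ⟨y, hy1, hy2, hy3, hy4⟩ := hzmem
    apply csInf_le hbdd'
    refine ⟨y, hy1, ?_, by linarith, hy4⟩
    intro i j hij
    have hijLB : LB < d i j := lt_of_le_of_lt hLB' hij
    have hcon := hy2 i j hijLB
    set F := univ.filter (fun j' => d i j' < d i j) with hF
    set SA := ∑ j' ∈ F, (d i j - max LB (d i j')) * y j' with hSA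
    set SB := ∑ j' ∈ F, (d i j - max LB' (d i j')) * y j' with hSB
    have key : (d i j - LB') * SA ≤ (d i j - LB) * SB := by
      rw [hSA, hSB, Finset.mul_sum, Finset.mul_sum]
      apply Finset.sum_le_sum
      intro j' hj'
      have hj'lt : d i j' < d i j := by simpa [hF] using hj'
      exact ptwise (d i j) (d i j') LB LB' (y j') hLB' hij hj'lt (hy4 j').1
    have hSAge : d i j - LB - ε ≤ SA := by linarith
    have ha : 0 < d i j - LB := by linarith
    have hb : 0 < d i j - LB' := by linarith
    have hba : d i j - LB' ≤ d i j - LB := by linarith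
    have : (d i j - LB') - ε ≤ SB := by
      nlinarith [mul_le_mul_of_nonneg_left hSAge hb.le,
        mul_nonneg (sub_nonneg.2 hba) hε.le]
    linarith
  linarith
end

section
/- The set {LB ∈ ℝ : L(LB) = LB} is nonempty and has a minimum element LB#, and this minimum LB# belongs to the set D of all distance values. -/
open Finset

section Aux

variable {I J : Type*} [Fintype I] [Fintype J] [Nonempty I] [Nonempty J]

/-- There is a 0/1 vector in the box summing to `p`. -/
lemma exists_box_sum (J : Type*) [Fintype J] {p : ℕ} (hp2 : p ≤ Fintype.card J) :
    ∃ y : J → ℝ, (∑ j, y j = (p : ℝ)) ∧ ∀ j, 0 ≤ y j ∧ y j ≤ 1 := by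
  classical
  obtain ⟨s, -, hs⟩ := Finset.exists_subset_card_eq (by simpa using hp2 : p ≤ (univ : Finset J).card)
  refine ⟨fun j => if j ∈ s then (1 : ℝ) else 0, ?_, ?_⟩
  · rw [Finset.sum_ite_mem, Finset.univ_inter, Finset.sum_const, hs]
    simp
  · intro j
    by_cases h : j ∈ s <;> simp [h]

/-- The feasible set of PCLB is nonempty. -/
lemma feas_nonempty (d : I → J → ℝ) (hd : ∀ i j, 0 ≤ d i j) (p : ℕ)
    (hp2 : p ≤ Fintype.card J) {C : ℝ} (hC : ∀ i j, d i j ≤ C) (LB : ℝ) :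
    {z : ℝ | ∃ y, PCLBFeas d p LB y z}.Nonempty := by
  classical
  obtain ⟨y, hsum, hbox⟩ := exists_box_sum J hp2
  refine ⟨max LB C, y, hsum, ?_, le_max_left _ _, hbox⟩
  intro i j hij
  have hs : 0 ≤ ∑ j' ∈ univ.filter (fun j' => d i j' < d i j),
      (d i j - max LB (d i j')) * y j' := by
    refine Finset.sum_nonneg ?_
    intro j' hj'
    have hj'lt : d i j' < d i j := (Finset.mem_filter.1 hj').2
    exact mul_nonneg (by rw [sub_nonneg]; exact max_le hij.le hj'lt.le) (hbox j').1
  have := hC i j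
  have := le_max_right LB C
  linarith

/-- The LP value is at least `LB`. -/
lemma lval_ge (d : I → J → ℝ) (hd : ∀ i j, 0 ≤ d i j) (p : ℕ)
    (hp2 : p ≤ Fintype.card J) {C : ℝ} (hC : ∀ i j, d i j ≤ C) (LB : ℝ) :
    LB ≤ Lval d p LB := by
  refine le_csInf (feas_nonempty d hd p hp2 hC LB) ?_
  rintro z ⟨y, hf⟩
  exact hf.2.2.1

/-- An approximate fractional cover gives an upper bound on the LP value. -/
lemma cover_lval_le (d : I → J → ℝ) (p : ℕ) {LB : ℝ} (h0 : 0 ≤ LB)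
    {C ε : ℝ} (hC0 : 0 ≤ C) (hC : ∀ i j, d i j ≤ C) (hε : 0 ≤ ε)
    {y : J → ℝ} (hsum : ∑ j, y j = (p : ℝ)) (hbox : ∀ j, 0 ≤ y j ∧ y j ≤ 1)
    (hcov : ∀ i, 1 - ε ≤ ∑ j ∈ univ.filter (fun j => d i j ≤ LB), y j) :
    Lval d p LB ≤ LB + ε * C := by
  classical
  refine csInf_le ⟨LB, ?_⟩ ?_
  · rintro z ⟨y', hf⟩
    exact hf.2.2.1
  refine ⟨y, hsum, ?_, by nlinarith, hbox⟩
  intro i j hij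
  have key : ∑ j' ∈ univ.filter (fun j' => d i j' ≤ LB), (d i j - LB) * y j'
      ≤ ∑ j' ∈ univ.filter (fun j' => d i j' < d i j), (d i j - max LB (d i j')) * y j' := by
    have h1 : ∑ j' ∈ univ.filter (fun j' => d i j' ≤ LB), (d i j - LB) * y j'
        = ∑ j' ∈ univ.filter (fun j' => d i j' ≤ LB), (d i j - max LB (d i j')) * y j' := by
      refine Finset.sum_congr rfl ?_
      intro j' hj'
      rw [max_eq_left (Finset.mem_filter.1 hj').2]
    rw [h1]
    refine Finset.sum_le_sum_of_subset_of_nonneg ?_ ?_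
    · intro j' hj'
      refine Finset.mem_filter.2 ⟨Finset.mem_univ _, ?_⟩
      exact lt_of_le_of_lt (Finset.mem_filter.1 hj').2 hij
    · intro j' hj' _
      have hj'lt : d i j' < d i j := (Finset.mem_filter.1 hj').2
      exact mul_nonneg (by rw [sub_nonneg]; exact max_le hij.le hj'lt.le) (hbox j').1
  have hmul : (d i j - LB) * (∑ j' ∈ univ.filter (fun j' => d i j' ≤ LB), y j')
      = ∑ j' ∈ univ.filter (fun j' => d i j' ≤ LB), (d i j - LB) * y j' :=
    Finset.mul_sum _ _ _
  have hc := hcov i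
  have h2 : (d i j - LB) * (1 - ε)
      ≤ (d i j - LB) * (∑ j' ∈ univ.filter (fun j' => d i j' ≤ LB), y j') :=
    mul_le_mul_of_nonneg_left hc (by linarith)
  have h3 := hC i j
  nlinarith [key, hmul, h2]

/-- From `L(LB) = LB` we get approximate fractional covers at `LB`. -/
lemma approx_cover (d : I → J → ℝ) (hd : ∀ i j, 0 ≤ d i j) (p : ℕ) (hp1 : 1 ≤ p)
    (hp2 : p ≤ Fintype.card J) {C : ℝ} (hC : ∀ i j, d i j ≤ C) {LB : ℝ}
    (h : Lval d p LB = LB) {ε : ℝ} (hε : 0 < ε) :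
    ∃ y : J → ℝ, (∑ j, y j = (p : ℝ)) ∧ (∀ j, 0 ≤ y j ∧ y j ≤ 1) ∧
      ∀ i, 1 - ε ≤ ∑ j ∈ univ.filter (fun j => d i j ≤ LB), y j := by
  classical
  have hp1' : (1 : ℝ) ≤ (p : ℝ) := by exact_mod_cast hp1
  set I' : Finset I := univ.filter (fun i : I => ∃ j, LB < d i j) with hI'def
  by_cases hI' : I'.Nonempty
  · -- minimal "next distance" for each i ∈ I'
    have hbm : ∀ i ∈ I', ∃ bi : ℝ, (∃ j, d i j = bi ∧ LB < d i j) ∧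
        (∀ j, LB < d i j → bi ≤ d i j) := by
      intro i hi
      obtain ⟨j₀, hj₀⟩ := (Finset.mem_filter.1 hi).2
      have hne : ((univ.filter fun j => LB < d i j).image (d i)).Nonempty :=
        ⟨d i j₀, Finset.mem_image.2 ⟨j₀, Finset.mem_filter.2 ⟨Finset.mem_univ _, hj₀⟩, rfl⟩⟩
      refine ⟨((univ.filter fun j => LB < d i j).image (d i)).min' hne, ?_, ?_⟩
      · obtain ⟨j, hj, hjeq⟩ := Finset.mem_image.1 (Finset.min'_mem _ hne)
        exact ⟨j, hjeq, (Finset.mem_filter.1 hj).2⟩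
      · intro j hj
        exact Finset.min'_le _ _ (Finset.mem_image.2 ⟨j, Finset.mem_filter.2 ⟨Finset.mem_univ _, hj⟩, rfl⟩)
    choose! b hb1 hb2 using hbm
    have hBne : (I'.image fun i => b i - LB).Nonempty := hI'.image _
    set m : ℝ := (I'.image fun i => b i - LB).min' hBne with hmdef
    have hm : 0 < m := by
      obtain ⟨i, hi, hieq⟩ := Finset.mem_image.1 (Finset.min'_mem _ hBne)
      obtain ⟨j, hjeq, hjlt⟩ := hb1 i hi
      have hm' : m = b i - LB := by rw [hmdef, hieq]
      rw [hm']
      linarith [hjeq ▸ hjlt]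
    have hmle : ∀ i ∈ I', m ≤ b i - LB := by
      intro i hi
      exact Finset.min'_le _ _ (Finset.mem_image.2 ⟨i, hi, rfl⟩)
    have hδ : 0 < ε * m := mul_pos hε hm
    obtain ⟨z, hzZ, hzlt⟩ := Real.lt_sInf_add_pos (feas_nonempty d hd p hp2 hC LB) hδ
    rw [show sInf {z : ℝ | ∃ y, PCLBFeas d p LB y z} = Lval d p LB from rfl, h] at hzlt
    obtain ⟨y, hf⟩ := hzZ
    refine ⟨y, hf.1, hf.2.2.2, ?_⟩
    intro i
    by_cases hi : i ∈ I'
    · obtain ⟨j₀, hj₀eq, hj₀lt⟩ := hb1 i hi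
      have hcon := hf.2.1 i j₀ hj₀lt
      have hfeq : univ.filter (fun j' => d i j' < d i j₀)
          = univ.filter (fun j' => d i j' ≤ LB) := by
        ext j'
        simp only [Finset.mem_filter, Finset.mem_univ, true_and]
        constructor
        · intro hlt
          by_contra hgt
          push_neg at hgt
          have := hb2 i hi j' hgt
          rw [hj₀eq] at hlt
          linarith
        · intro hle
          exact lt_of_le_of_lt hle hj₀lt
      rw [hfeq] at hcon
      have hsum_eq : ∑ j' ∈ univ.filter (fun j' => d i j' ≤ LB),
          (d i j₀ - max LB (d i j')) * y j'
          = (d i j₀ - LB) * ∑ j' ∈ univ.filter (fun j' => d i j' ≤ LB), y j' := by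
        rw [Finset.mul_sum]
        refine Finset.sum_congr rfl ?_
        intro j' hj'
        rw [max_eq_left (Finset.mem_filter.1 hj').2]
      rw [hsum_eq] at hcon
      have ht : 0 < d i j₀ - LB := by linarith
      have hmle' : m ≤ d i j₀ - LB := by
        rw [hj₀eq]
        exact hmle i hi
      set c := ∑ j' ∈ univ.filter (fun j' => d i j' ≤ LB), y j'
      -- d i j₀ - (d i j₀ - LB) * c ≤ z < LB + ε * m ≤ LB + ε * (d i j₀ - LB)
      nlinarith [mul_le_mul_of_nonneg_left hmle' hε.le]
    · have hall : ∀ j, d i j ≤ LB := by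
        intro j
        by_contra hgt
        exact hi (Finset.mem_filter.2 ⟨Finset.mem_univ _, ⟨j, not_le.1 hgt⟩⟩)
      have : univ.filter (fun j => d i j ≤ LB) = (univ : Finset J) :=
        Finset.filter_true_of_mem (fun j _ => hall j)
      rw [this, hf.1]
      linarith
  · -- every customer fully covered
    have hall : ∀ (i : I) (j : J), d i j ≤ LB := by
      intro i j
      by_contra hgt
      exact hI' ⟨i, Finset.mem_filter.2 ⟨Finset.mem_univ _, ⟨j, not_le.1 hgt⟩⟩⟩
    obtain ⟨y, hsum, hbox⟩ := exists_box_sum J hp2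
    refine ⟨y, hsum, hbox, ?_⟩
    intro i
    have : univ.filter (fun j => d i j ≤ LB) = (univ : Finset J) :=
      Finset.filter_true_of_mem (fun j _ => hall i j)
    rw [this, hsum]
    linarith

end Aux

/-- The set `{LB ∈ ℝ : L(LB) = LB}` is nonempty and has a minimum element `LB#`,
and `LB#` belongs to the set `D` of all distance values. -/
theorem stmt_12 {I J : Type*} [Fintype I] [Fintype J] [Nonempty I] [Nonempty J]
    (d : I → J → ℝ) (hd : ∀ i j, 0 ≤ d i j)
    (p : ℕ) (hp1 : 1 ≤ p) (hp2 : p ≤ Fintype.card J) :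
    ∃ LBsharp : ℝ, IsLeast {LB : ℝ | Lval d p LB = LB} LBsharp ∧
      ∃ (i : I) (j : J), d i j = LBsharp := by
  classical
  have hp1' : (1 : ℝ) ≤ (p : ℝ) := by exact_mod_cast hp1
  set DF : Finset ℝ := (univ : Finset (I × J)).image (fun q => d q.1 q.2) with hDFdef
  have hDFne : DF.Nonempty := ⟨d (Classical.arbitrary I) (Classical.arbitrary J),
    Finset.mem_image.2 ⟨(Classical.arbitrary I, Classical.arbitrary J), Finset.mem_univ _, rfl⟩⟩
  set Dmax : ℝ := DF.max' hDFne with hDmaxdef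
  have hDmax : ∀ i j, d i j ≤ Dmax := fun i j =>
    Finset.le_max' DF (d i j) (Finset.mem_image.2 ⟨(i, j), Finset.mem_univ _, rfl⟩)
  have hDmax0 : 0 ≤ Dmax :=
    le_trans (hd (Classical.arbitrary I) (Classical.arbitrary J))
      (hDmax (Classical.arbitrary I) (Classical.arbitrary J))
  -- Dmax is a fixed point
  have hDmaxfix : Lval d p Dmax = Dmax := by
    refine le_antisymm ?_ (lval_ge d hd p hp2 hDmax Dmax)
    obtain ⟨y, hsum, hbox⟩ := exists_box_sum J hp2
    have hcov : ∀ i, 1 - 0 ≤ ∑ j ∈ univ.filter (fun j => d i j ≤ Dmax), y j := by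
      intro i
      have : univ.filter (fun j => d i j ≤ Dmax) = (univ : Finset J) :=
        Finset.filter_true_of_mem (fun j _ => hDmax i j)
      rw [this, hsum]
      linarith
    have := cover_lval_le d p hDmax0 hDmax0 hDmax le_rfl hsum hbox hcov
    linarith
  set F : Finset ℝ := DF.filter (fun v => Lval d p v = v) with hFdef
  have hFne : F.Nonempty :=
    ⟨Dmax, Finset.mem_filter.2 ⟨Finset.max'_mem _ hDFne, hDmaxfix⟩⟩
  refine ⟨F.min' hFne, ⟨(Finset.mem_filter.1 (F.min'_mem hFne)).2, ?_⟩, ?_⟩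
  · -- lower bound
    intro LB hLB
    have hLB : Lval d p LB = LB := hLB
    -- every customer has a facility within LB
    have hex : ∀ i : I, ∃ j, d i j ≤ LB := by
      intro i
      by_contra hno
      push_neg at hno
      obtain ⟨y, hsum, hbox, hcov⟩ :=
        approx_cover d hd p hp1 hp2 hDmax hLB (ε := 1/2) (by norm_num)
      have hc := hcov i
      have : univ.filter (fun j => d i j ≤ LB) = (∅ : Finset J) := by
        refine Finset.filter_false_of_mem ?_
        intro j _
        exact not_le.2 (hno j)
      rw [this, Finset.sum_empty] at hc
      norm_num at hc
    set Dle : Finset ℝ := DF.filter (fun v => v ≤ LB) with hDledef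
    have hDlene : Dle.Nonempty := by
      obtain ⟨j, hj⟩ := hex (Classical.arbitrary I)
      exact ⟨d (Classical.arbitrary I) j, Finset.mem_filter.2
        ⟨Finset.mem_image.2 ⟨(Classical.arbitrary I, j), Finset.mem_univ _, rfl⟩, hj⟩⟩
    set a : ℝ := Dle.max' hDlene with hadef
    have haDF : a ∈ DF := (Finset.mem_filter.1 (Finset.max'_mem _ hDlene)).1
    have haLB : a ≤ LB := (Finset.mem_filter.1 (Finset.max'_mem _ hDlene)).2
    have ha0 : 0 ≤ a := by
      obtain ⟨q, -, hq⟩ := Finset.mem_image.1 haDF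
      rw [← hq]
      exact hd q.1 q.2
    have hfilter_eq : ∀ i : I, univ.filter (fun j => d i j ≤ LB)
        = univ.filter (fun j => d i j ≤ a) := by
      intro i
      ext j
      simp only [Finset.mem_filter, Finset.mem_univ, true_and]
      constructor
      · intro hle
        exact Finset.le_max' Dle (d i j) (Finset.mem_filter.2
          ⟨Finset.mem_image.2 ⟨(i, j), Finset.mem_univ _, rfl⟩, hle⟩)
      · intro hle
        exact le_trans hle haLB
    -- a is a fixed point
    have hkey : ∀ ε : ℝ, 0 < ε → Lval d p a ≤ a + ε := by
      intro ε hεpos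
      have hD1 : (0 : ℝ) < Dmax + 1 := by linarith
      obtain ⟨y, hsum, hbox, hcov⟩ :=
        approx_cover d hd p hp1 hp2 hDmax hLB (ε := ε / (Dmax + 1)) (div_pos hεpos hD1)
      have hcov' : ∀ i, 1 - ε / (Dmax + 1) ≤ ∑ j ∈ univ.filter (fun j => d i j ≤ a), y j := by
        intro i
        rw [← hfilter_eq i]
        exact hcov i
      have := cover_lval_le d p ha0 (by linarith : (0:ℝ) ≤ Dmax + 1)
        (fun i j => by linarith [hDmax i j]) (div_pos hεpos hD1).le hsum hbox hcov'
      rwa [div_mul_cancel₀ _ (ne_of_gt hD1)] at this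
    have hle : Lval d p a ≤ a := le_of_forall_pos_le_add hkey
    have hfix : Lval d p a = a := le_antisymm hle (lval_ge d hd p hp2 hDmax a)
    exact le_trans (Finset.min'_le F a (Finset.mem_filter.2 ⟨haDF, hfix⟩)) haLB
  · -- LB# is a distance value
    have := (Finset.mem_filter.1 (F.min'_mem hFne)).1
    obtain ⟨q, -, hq⟩ := Finset.mem_image.1 this
    exact ⟨q.1, q.2, hq⟩
end
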